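/- arXiv:1409.6326 — 7 statements merged into one kernel-verified Lean document; each statement's English description precedes it below -/
import Mathlib

section
/- Let V be a finite-dimensional vector space, Γ a locally finite graph, and τ : V^Γ → V^Γ a locally specifiable linear map. If τ is surjective, then its transpose τ' is pre-injective, i.e., τ' is injective on the subspace of finitely supported functions. -/
open Classical

/-- A (simple, undirected, loopless) locally finite graph. -/
structure LGraph (Γ : Type*) where
  Adj : Γ → Γ → Prop
  symm : ∀ {x y}, Adj x y → Adj y x
  loopless : ∀ x, ¬ Adj x x
  locFin : ∀ x, {y | Adj x y}.Finite

/-- `τ` is locally specifiable: `τ(f)(x)` depends only on `f(x)` and the values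
`f(y)` for neighbours `y` of `x`. -/
def LocallySpecifiable {Γ V : Type*} (G : LGraph Γ) (τ : (Γ → V) → (Γ → V)) : Prop :=
  ∀ f g : Γ → V, ∀ x : Γ, f x = g x → (∀ y, G.Adj x y → f y = g y) → τ f x = τ g x

/-- `τ` is pre-injective: injective on finitely supported functions. -/
def PreInjective {Γ V : Type*} [Zero V] (τ : (Γ → V) → (Γ → V)) : Prop :=
  ∀ f g : Γ → V, (Function.support f).Finite → (Function.support g).Finite →
    τ f = τ g → f = g

/-- The basis element `δ_x^i` of finitely supported `K^r`-valued functions. -/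
noncomputable def deltaV {Γ K : Type*} [Semiring K] {r : ℕ} (x : Γ) (i : Fin r) :
    Γ → Fin r → K :=
  fun z => if z = x then Pi.single i 1 else 0

/-- The transpose of a linear map `τ` on `(K^r)^Γ`, given by transposing the
matrix of `τ` with respect to the basis `{δ_x^i}` of finitely supported
functions: `(τ' f)(x)(i) = ∑_{(y,j)} (τ δ_x^i)(y)(j) · f(y)(j)`. -/
noncomputable def transposeOp {Γ K : Type*} [Semiring K] {r : ℕ}
    (τ : (Γ → Fin r → K) → (Γ → Fin r → K)) (f : Γ → Fin r → K)
    (x : Γ) (i : Fin r) : K :=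
  ∑ᶠ p : Γ × Fin r, τ (deltaV x i) p.1 p.2 * f p.1 p.2

lemma deltaV_apply {Γ K : Type*} [Semiring K] {r : ℕ} (x z : Γ) (i k : Fin r) :
    deltaV x i z k = if z = x ∧ k = i then (1 : K) else 0 := by
  classical
  unfold deltaV
  by_cases hz : z = x
  · simp [hz, Pi.single_apply]
  · simp [hz]

lemma sum_deltaV {Γ K : Type*} [Semiring K] {r : ℕ} (NF : Finset Γ)
    (h : Γ → Fin r → K) (hsupp : ∀ z ∉ NF, h z = 0) :
    h = ∑ q ∈ NF ×ˢ (Finset.univ : Finset (Fin r)), h q.1 q.2 • deltaV q.1 q.2 := by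
  classical
  ext z k
  rw [Finset.sum_apply, Finset.sum_apply]
  have : ∀ q ∈ NF ×ˢ (Finset.univ : Finset (Fin r)),
      (h q.1 q.2 • deltaV q.1 q.2) z k = if q = (z, k) then h z k else 0 := by
    intro q _
    rw [Pi.smul_apply, Pi.smul_apply, smul_eq_mul, deltaV_apply]
    by_cases hq : q = (z, k)
    · subst hq; simp
    · have : ¬ (z = q.1 ∧ k = q.2) := by
        rintro ⟨h1, h2⟩
        exact hq (Prod.ext h1.symm h2.symm)
      simp [this, hq]
  rw [Finset.sum_congr rfl this, Finset.sum_ite_eq' (NF ×ˢ Finset.univ) (z, k)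
    (fun _ => h z k)]
  by_cases hz : z ∈ NF
  · simp [hz]
  · simp [hz, hsupp z hz]

/-- If a locally specifiable linear map `τ : V^Γ → V^Γ` (with `V = K^r`
finite-dimensional) is surjective, then its transpose is pre-injective. -/
theorem preInjective_transpose_of_surjective {Γ K : Type*} [Field K] {r : ℕ}
    (G : LGraph Γ) (τ : (Γ → Fin r → K) →ₗ[K] (Γ → Fin r → K))
    (hloc : LocallySpecifiable G τ)
    (hsurj : Function.Surjective τ) :
    PreInjective (transposeOp (⇑τ)) := by
  classical
  intro f g hf hg heq
  set φ : Γ → Fin r → K := f - g with hφdef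
  suffices h0 : φ = 0 by
    funext z
    have := congrFun h0 z
    simpa [hφdef, sub_eq_zero] using this
  by_contra hne
  obtain ⟨y, hy⟩ : ∃ y, φ y ≠ 0 := by
    by_contra hall
    push_neg at hall
    exact hne (funext hall)
  obtain ⟨j, hj⟩ : ∃ j, φ y j ≠ 0 := by
    by_contra hall
    push_neg at hall
    exact hy (funext hall)
  -- the support region
  set S : Finset Γ := hf.toFinset ∪ hg.toFinset with hSdef
  have hφS : ∀ z, z ∉ S → φ z = 0 := by
    intro z hz
    simp only [hSdef, Finset.mem_union, Set.Finite.mem_toFinset,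
      Function.mem_support, not_or, not_not] at hz
    simp [hφdef, hz.1, hz.2]
  set A : Finset (Γ × Fin r) := S ×ˢ (Finset.univ : Finset (Fin r)) with hAdef
  -- transposeOp as a finite sum
  have hsum : ∀ (h : Γ → Fin r → K), (∀ z, z ∉ S → h z = 0) → ∀ x i,
      transposeOp (⇑τ) h x i = ∑ p ∈ A, τ (deltaV x i) p.1 p.2 * h p.1 p.2 := by
    intro h hh x i
    apply finsum_eq_sum_of_support_subset
    intro p hp
    simp only [Function.mem_support] at hp
    have : h p.1 ≠ 0 := by
      intro h0
      apply hp
      rw [h0]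
      simp
    have hp1 : p.1 ∈ S := by
      by_contra hc
      exact this (hh _ hc)
    simp [hAdef, hp1]
  -- the transpose kills φ
  have hTφ : ∀ x i, (∑ p ∈ A, τ (deltaV x i) p.1 p.2 * φ p.1 p.2) = 0 := by
    intro x i
    have h1 := hsum f (fun z hz => by
      have : z ∉ hf.toFinset := fun h => hz (Finset.mem_union_left _ h)
      simpa [Set.Finite.mem_toFinset, Function.mem_support, not_not] using this) x i
    have h2 := hsum g (fun z hz => by
      have : z ∉ hg.toFinset := fun h => hz (Finset.mem_union_right _ h)
      simpa [Set.Finite.mem_toFinset, Function.mem_support, not_not] using this) x i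
    have : ∑ p ∈ A, τ (deltaV x i) p.1 p.2 * φ p.1 p.2
        = ∑ p ∈ A, τ (deltaV x i) p.1 p.2 * f p.1 p.2
          - ∑ p ∈ A, τ (deltaV x i) p.1 p.2 * g p.1 p.2 := by
      rw [← Finset.sum_sub_distrib]
      apply Finset.sum_congr rfl
      intro p _
      simp [hφdef, mul_sub]
    rw [this, ← h1, ← h2, heq]
    ring
  -- the finite neighbourhood of S
  have hNfin : (↑S ∪ ⋃ z ∈ (S : Set Γ), {w | G.Adj z w}).Finite :=
    (S.finite_toSet).union (Set.Finite.biUnion S.finite_toSet fun z _ => G.locFin z)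
  set NF : Finset Γ := hNfin.toFinset with hNFdef
  -- get a preimage of δ_y^j and truncate it
  obtain ⟨gg, hgg⟩ := hsurj (deltaV y j)
  set g₀ : Γ → Fin r → K := fun z => if z ∈ NF then gg z else 0 with hg₀def
  have hg₀supp : ∀ z ∉ NF, g₀ z = 0 := by
    intro z hz; simp [hg₀def, hz]
  -- τ g₀ agrees with τ gg on S
  have hagree : ∀ z ∈ S, τ g₀ z = τ gg z := by
    intro z hz
    apply hloc
    · have : z ∈ NF := by
        simp only [hNFdef, Set.Finite.mem_toFinset]
        exact Or.inl hz
      simp [hg₀def, this]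
    · intro w hw
      have : w ∈ NF := by
        simp only [hNFdef, Set.Finite.mem_toFinset]
        refine Or.inr ?_
        exact Set.mem_biUnion hz hw
      simp [hg₀def, this]
  set B : Finset (Γ × Fin r) := NF ×ˢ (Finset.univ : Finset (Fin r)) with hBdef
  -- decompose g₀ over deltas
  have hdecomp : τ g₀ = ∑ q ∈ B, g₀ q.1 q.2 • τ (deltaV q.1 q.2) := by
    conv_lhs => rw [sum_deltaV NF g₀ hg₀supp]
    rw [map_sum]
    apply Finset.sum_congr rfl
    intro q _
    rw [map_smul]
  -- the key computation
  have key : (0 : K) = ∑ p ∈ A, τ g₀ p.1 p.2 * φ p.1 p.2 := by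
    calc (0 : K) = ∑ q ∈ B, g₀ q.1 q.2 *
          (∑ p ∈ A, τ (deltaV q.1 q.2) p.1 p.2 * φ p.1 p.2) := by
          simp [hTφ]
      _ = ∑ q ∈ B, ∑ p ∈ A, g₀ q.1 q.2 * (τ (deltaV q.1 q.2) p.1 p.2 * φ p.1 p.2) := by
          apply Finset.sum_congr rfl
          intro q _
          rw [Finset.mul_sum]
      _ = ∑ p ∈ A, ∑ q ∈ B, g₀ q.1 q.2 * (τ (deltaV q.1 q.2) p.1 p.2 * φ p.1 p.2) :=
          Finset.sum_comm
      _ = ∑ p ∈ A, (∑ q ∈ B, g₀ q.1 q.2 * τ (deltaV q.1 q.2) p.1 p.2) * φ p.1 p.2 := by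
          apply Finset.sum_congr rfl
          intro p _
          rw [Finset.sum_mul]
          apply Finset.sum_congr rfl
          intro q _
          ring
      _ = ∑ p ∈ A, τ g₀ p.1 p.2 * φ p.1 p.2 := by
          apply Finset.sum_congr rfl
          intro p _
          congr 1
          rw [hdecomp, Finset.sum_apply, Finset.sum_apply]
          apply Finset.sum_congr rfl
          intro q _
          simp
  -- replace g₀ by gg and evaluate
  have key2 : (0 : K) = ∑ p ∈ A, deltaV y j p.1 p.2 * φ p.1 p.2 := by
    rw [key]
    apply Finset.sum_congr rfl
    intro p hp
    have hp1 : p.1 ∈ S := by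
      simp only [hAdef, Finset.mem_product] at hp
      exact hp.1
    rw [congrFun (hagree p.1 hp1) p.2, ← hgg]
  have : ∑ p ∈ A, deltaV y j p.1 p.2 * φ p.1 p.2 = φ y j := by
    have hmem : (y, j) ∈ A := by
      have hyS : y ∈ S := by
        by_contra hc
        exact hy (hφS y hc)
      simp [hAdef, hyS]
    have : ∀ p ∈ A, deltaV y j p.1 p.2 * φ p.1 p.2
        = if p = (y, j) then φ y j else 0 := by
      intro p _
      rw [deltaV_apply]
      by_cases hq : p = (y, j)
      · subst hq; simp
      · have : ¬ (p.1 = y ∧ p.2 = j) := by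
          rintro ⟨h1, h2⟩
          exact hq (Prod.ext h1 h2)
        simp [this, hq]
    rw [Finset.sum_congr rfl this,
      Finset.sum_ite_eq' A (y, j) (fun _ => φ y j), if_pos hmem]
  rw [this] at key2
  exact hj key2.symm
end

section
/- Let V be a finite-dimensional vector space, Γ a locally finite graph, and τ : V^Γ → V^Γ a locally specifiable linear map. If the transpose τ' is pre-injective then τ is surjective. Combined with the converse, τ is surjective if and only if τ' is pre-injective. -/
open Classical

section Aux

variable {Γ K : Type*} [Field K] {r : ℕ} (G : LGraph Γ)
  (τ : (Γ → Fin r → K) →ₗ[K] (Γ → Fin r → K))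
  (hloc : LocallySpecifiable G τ)

/-- Closed neighbourhood of `x` as a `Finset`. -/
noncomputable def nbF (x : Γ) : Finset Γ := insert x (G.locFin x).toFinset

lemma mem_nbF {x z : Γ} : z ∈ nbF G x ↔ z = x ∨ G.Adj x z := by
  simp [nbF, Set.Finite.mem_toFinset]

lemma nbF_symm {x z : Γ} (h : z ∈ nbF G x) : x ∈ nbF G z := by
  rcases (mem_nbF G).1 h with h | h
  · exact (mem_nbF G).2 (Or.inl h.symm)
  · exact (mem_nbF G).2 (Or.inr (G.symm h))

include hloc in
lemma tau_delta_support (x : Γ) (i : Fin r) (y : Γ) (hy : y ∉ nbF G x) :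
    τ (deltaV x i) y = 0 := by
  have hne : y ≠ x := fun h => hy ((mem_nbF G).2 (Or.inl h))
  have h0 : τ (deltaV x i) y = τ 0 y := by
    refine hloc (deltaV x i) 0 y ?_ ?_
    · simp [deltaV, hne]
    · intro z hz
      have hzx : z ≠ x := by
        rintro rfl
        exact hy ((mem_nbF G).2 (Or.inr (G.symm hz)))
      simp [deltaV, hzx]
  rw [h0, map_zero]
  rfl

/-- `transposeOp` as a finite sum over any finset containing the support of `f`. -/
lemma trep' (f : Γ → Fin r → K) (x : Γ) (i : Fin r) (S : Finset Γ)
    (hS : ∀ y, f y ≠ 0 → y ∈ S) :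
    transposeOp (⇑τ) f x i = ∑ y ∈ S, ∑ j, τ (deltaV x i) y j * f y j := by
  rw [transposeOp, finsum_eq_sum_of_support_subset _
    (s := S ×ˢ (Finset.univ : Finset (Fin r))) ?_, Finset.sum_product]
  intro p hp
  have hp' : f p.1 p.2 ≠ 0 := right_ne_zero_of_mul hp
  have : f p.1 ≠ 0 := fun h => hp' (by rw [h]; rfl)
  simp [hS _ this]

include hloc in
/-- `transposeOp` as a finite sum over the closed neighbourhood of `x`. -/
lemma trep (f : Γ → Fin r → K) (x : Γ) (i : Fin r) :
    transposeOp (⇑τ) f x i = ∑ y ∈ nbF G x, ∑ j, τ (deltaV x i) y j * f y j := by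
  rw [transposeOp, finsum_eq_sum_of_support_subset _
    (s := (nbF G x) ×ˢ (Finset.univ : Finset (Fin r))) ?_, Finset.sum_product]
  intro p hp
  have hp' : τ (deltaV x i) p.1 p.2 ≠ 0 := left_ne_zero_of_mul hp
  have h1 : p.1 ∈ nbF G x := by
    by_contra h
    exact hp' (by rw [tau_delta_support G τ hloc x i p.1 h]; rfl)
  simp [h1]

include hloc in
lemma key (u : Γ → Fin r → K) (T : Finset Γ) (y : Γ)
    (hyT : ∀ z, z = y ∨ G.Adj y z → z ∈ T) (j : Fin r) :
    ∑ x ∈ T, ∑ i, u x i * τ (deltaV x i) y j = τ u y j := by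
  classical
  set uT : Γ → Fin r → K := fun z => if z ∈ T then u z else 0 with huT
  have h1 : τ u y = τ uT y := by
    refine hloc u uT y ?_ ?_
    · simp [huT, hyT y (Or.inl rfl)]
    · intro z hz; simp [huT, hyT z (Or.inr hz)]
  have hsingle : ∀ v : Fin r → K, ∑ i, v i • (Pi.single i 1 : Fin r → K) = v := by
    intro v
    funext k
    simp [Finset.sum_apply, Pi.single_apply, mul_ite]
  have h2 : uT = ∑ x ∈ T, ∑ i, u x i • deltaV x i := by
    funext z
    simp only [Finset.sum_apply]
    have : ∀ x ∈ T, (∑ i, (u x i • deltaV x i) z) =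
        if x = z then u z else 0 := by
      intro x _
      by_cases hxz : x = z
      · subst hxz
        simp only [Pi.smul_apply, deltaV, if_pos rfl]
        simpa using hsingle (u x)
      · simp [deltaV, Ne.symm hxz, hxz]
    rw [Finset.sum_congr rfl this, Finset.sum_ite_eq' T z (fun _ => u z)]
  have h3 : τ uT y j = ∑ x ∈ T, ∑ i, u x i * τ (deltaV x i) y j := by
    rw [h2, map_sum]
    rw [Finset.sum_apply, Finset.sum_apply]
    refine Finset.sum_congr rfl fun x _ => ?_
    rw [map_sum, Finset.sum_apply, Finset.sum_apply]
    refine Finset.sum_congr rfl fun i _ => ?_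
    rw [map_smul]
    simp
  rw [h1, h3]

include hloc in
/-- The adjoint identity `⟨τ u, h⟩ = ⟨u, τ' h⟩`. -/
lemma adj2 (u h : Γ → Fin r → K) (S T : Finset Γ)
    (hS : ∀ y, h y ≠ 0 → y ∈ S)
    (hT : ∀ y ∈ S, ∀ x, x = y ∨ G.Adj y x → x ∈ T) :
    ∑ y ∈ S, ∑ j, τ u y j * h y j
      = ∑ x ∈ T, ∑ i, u x i * transposeOp (⇑τ) h x i := by
  have step1 : ∑ x ∈ T, ∑ i, u x i * transposeOp (⇑τ) h x i
      = ∑ q ∈ T ×ˢ (Finset.univ : Finset (Fin r)),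
          ∑ p ∈ S ×ˢ (Finset.univ : Finset (Fin r)),
            u q.1 q.2 * τ (deltaV q.1 q.2) p.1 p.2 * h p.1 p.2 := by
    rw [Finset.sum_product]
    refine Finset.sum_congr rfl fun x _ => Finset.sum_congr rfl fun i _ => ?_
    rw [Finset.sum_product, trep' τ h x i S hS, Finset.mul_sum]
    refine Finset.sum_congr rfl fun y _ => ?_
    rw [Finset.mul_sum]
    exact Finset.sum_congr rfl fun j _ => (mul_assoc _ _ _).symm
  rw [step1]
  have swap : ∑ q ∈ T ×ˢ (Finset.univ : Finset (Fin r)),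
      ∑ p ∈ S ×ˢ (Finset.univ : Finset (Fin r)),
        u q.1 q.2 * τ (deltaV q.1 q.2) p.1 p.2 * h p.1 p.2
    = ∑ p ∈ S ×ˢ (Finset.univ : Finset (Fin r)),
      ∑ q ∈ T ×ˢ (Finset.univ : Finset (Fin r)),
        u q.1 q.2 * τ (deltaV q.1 q.2) p.1 p.2 * h p.1 p.2 := Finset.sum_comm
  rw [swap]
  have step2 : ∀ p ∈ S ×ˢ (Finset.univ : Finset (Fin r)),
      (∑ q ∈ T ×ˢ (Finset.univ : Finset (Fin r)),
        u q.1 q.2 * τ (deltaV q.1 q.2) p.1 p.2 * h p.1 p.2)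
      = τ u p.1 p.2 * h p.1 p.2 := by
    intro p hp
    have hp1 : p.1 ∈ S := (Finset.mem_product.1 hp).1
    rw [← Finset.sum_mul]
    congr 1
    rw [Finset.sum_product]
    exact key G τ hloc u T p.1 (fun z hz => hT p.1 hp1 z hz) p.2
  exact (Finset.sum_product S Finset.univ
    (fun p => τ u p.1 p.2 * h p.1 p.2)).symm.trans (Finset.sum_congr rfl step2).symm

/-- Finitely supported function as an element of `V^Γ`. -/
noncomputable def fnOf (l : (Γ × Fin r) →₀ K) : Γ → Fin r → K := fun y j => l (y, j)

include hloc in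
lemma transposeOp_add (f g : Γ → Fin r → K) (x : Γ) (i : Fin r) :
    transposeOp (⇑τ) (f + g) x i = transposeOp (⇑τ) f x i + transposeOp (⇑τ) g x i := by
  rw [trep G τ hloc f x i, trep G τ hloc g x i, trep G τ hloc (f + g) x i,
    ← Finset.sum_add_distrib]
  refine Finset.sum_congr rfl fun y _ => ?_
  rw [← Finset.sum_add_distrib]
  refine Finset.sum_congr rfl fun j _ => ?_
  show _ * (f y j + g y j) = _
  ring

include hloc in
lemma transposeOp_smul (c : K) (f : Γ → Fin r → K) (x : Γ) (i : Fin r) :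
    transposeOp (⇑τ) (c • f) x i = c * transposeOp (⇑τ) f x i := by
  rw [trep G τ hloc f x i, trep G τ hloc (c • f) x i, Finset.mul_sum]
  refine Finset.sum_congr rfl fun y _ => ?_
  rw [Finset.mul_sum]
  refine Finset.sum_congr rfl fun j _ => ?_
  show _ * (c * f y j) = _
  ring

include hloc in
lemma transposeOp_zero (x : Γ) (i : Fin r) :
    transposeOp (⇑τ) (0 : Γ → Fin r → K) x i = 0 := by
  rw [trep G τ hloc]
  simp

include hloc in
lemma transposeOp_support (h : Γ → Fin r → K) (S : Finset Γ) (hS : ∀ y, h y ≠ 0 → y ∈ S)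
    (x : Γ) (i : Fin r) (hx : x ∉ S.biUnion (nbF G)) : transposeOp (⇑τ) h x i = 0 := by
  rw [trep G τ hloc h x i]
  refine Finset.sum_eq_zero fun y hy => Finset.sum_eq_zero fun j _ => ?_
  by_cases hyj : h y j = 0
  · rw [hyj, mul_zero]
  · exact absurd (Finset.mem_biUnion.2
      ⟨y, hS y (fun h0 => hyj (by rw [h0]; rfl)), nbF_symm G hy⟩) hx

/-- The transpose as a linear endomorphism of finitely supported functions. -/
noncomputable def Tprime (hloc : LocallySpecifiable G ⇑τ) :
    ((Γ × Fin r) →₀ K) →ₗ[K] ((Γ × Fin r) →₀ K) where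
  toFun l := Finsupp.onFinset (((l.support.image Prod.fst).biUnion (nbF G)) ×ˢ Finset.univ)
    (fun q => transposeOp (⇑τ) (fnOf l) q.1 q.2)
    (by
      intro q hq
      by_contra hq'
      apply hq
      have hx : q.1 ∉ (l.support.image Prod.fst).biUnion (nbF G) := fun hmem =>
        hq' (Finset.mem_product.2 ⟨hmem, Finset.mem_univ _⟩)
      refine transposeOp_support G τ hloc (fnOf l) (l.support.image Prod.fst) ?_ q.1 q.2 hx
      intro y hy
      obtain ⟨j, hj⟩ := Function.ne_iff.1 hy
      exact Finset.mem_image.2 ⟨(y, j), Finsupp.mem_support_iff.2 hj, rfl⟩)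
  map_add' a b := by
    ext q
    have hfn : fnOf (a + b) = fnOf a + fnOf b := by
      funext y j
      simp [fnOf]
    simp only [Finsupp.onFinset_apply, Finsupp.add_apply, hfn]
    exact transposeOp_add G τ hloc (fnOf a) (fnOf b) q.1 q.2
  map_smul' c a := by
    ext q
    have hfn : fnOf (c • a) = c • fnOf a := by
      funext y j
      simp [fnOf]
    simp only [Finsupp.onFinset_apply, Finsupp.smul_apply, RingHom.id_apply, hfn,
      smul_eq_mul]
    exact transposeOp_smul G τ hloc c (fnOf a) q.1 q.2

lemma Tprime_apply (hloc : LocallySpecifiable G ⇑τ) (l : (Γ × Fin r) →₀ K) (q : Γ × Fin r) :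
    Tprime G τ hloc l q = transposeOp (⇑τ) (fnOf l) q.1 q.2 := rfl

lemma fnOf_single (y : Γ) (j : Fin r) :
    fnOf (Finsupp.single (y, j) (1 : K)) = deltaV y j := by
  funext z k
  simp only [fnOf, Finsupp.single_apply, deltaV, Pi.single_apply]
  by_cases h1 : z = y
  · subst h1
    by_cases h2 : k = j
    · subst h2; simp
    · simp [Ne.symm h2, h2, Prod.ext_iff]
  · simp [Ne.symm h1, h1, Prod.ext_iff]

lemma sum_single_eq (l : (Γ × Fin r) →₀ K) (s : Finset (Γ × Fin r)) (hsub : l.support ⊆ s) :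
    ∑ p ∈ s, l p • Finsupp.single p (1 : K) = l := by
  have h1 : ∑ p ∈ s, l p • Finsupp.single p (1 : K)
      = ∑ p ∈ l.support, l p • Finsupp.single p 1 :=
    (Finset.sum_subset hsub (fun p _ hp => by
      simp [Finsupp.notMem_support_iff.mp hp])).symm
  rw [h1, Finset.sum_congr rfl (fun p _ => by
    rw [Finsupp.smul_single, smul_eq_mul, mul_one] : ∀ p ∈ l.support,
      l p • Finsupp.single p (1:K) = Finsupp.single p (l p))]
  exact Finsupp.sum_single l

end Aux

/-- Garden of Eden theorem for locally specifiable linear maps: a locally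
specifiable linear map `τ : V^Γ → V^Γ` (with `V = K^r` finite-dimensional) on a
locally finite graph is surjective if and only if its transpose is
pre-injective. -/
theorem surjective_iff_transpose_preInjective {Γ K : Type*} [Field K] {r : ℕ}
    (G : LGraph Γ) (τ : (Γ → Fin r → K) →ₗ[K] (Γ → Fin r → K))
    (hloc : LocallySpecifiable G τ) :
    Function.Surjective τ ↔ PreInjective (transposeOp (⇑τ)) := by
  constructor
  · -- surjectivity implies pre-injectivity of the transpose
    intro hsurj f g hf hg heq
    funext y j
    obtain ⟨u, hu⟩ := hsurj (deltaV y j)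
    classical
    set S : Finset Γ := insert y (hf.toFinset ∪ hg.toFinset) with hSdef
    set T : Finset Γ := S.biUnion (nbF G) with hTdef
    have hTprop : ∀ y' ∈ S, ∀ x, x = y' ∨ G.Adj y' x → x ∈ T := by
      intro y' hy' x hx
      exact Finset.mem_biUnion.2 ⟨y', hy', (mem_nbF G).2 hx⟩
    have hSf : ∀ z, f z ≠ 0 → z ∈ S := fun z hz => Finset.mem_insert.2
      (Or.inr (Finset.mem_union_left _ (hf.mem_toFinset.2 hz)))
    have hSg : ∀ z, g z ≠ 0 → z ∈ S := fun z hz => Finset.mem_insert.2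
      (Or.inr (Finset.mem_union_right _ (hg.mem_toFinset.2 hz)))
    have h1 := adj2 G τ hloc u f S T hSf hTprop
    have h2 := adj2 G τ hloc u g S T hSg hTprop
    rw [heq] at h1
    have h3 : ∑ y' ∈ S, ∑ j', τ u y' j' * f y' j'
        = ∑ y' ∈ S, ∑ j', τ u y' j' * g y' j' := h1.trans h2.symm
    rw [hu] at h3
    have hyS : y ∈ S := Finset.mem_insert_self _ _
    have dsum : ∀ v : Γ → Fin r → K,
        ∑ y' ∈ S, ∑ j', deltaV y j y' j' * v y' j' = v y j := by
      intro v
      have hterm : ∀ y' ∈ S, (∑ j', deltaV y j y' j' * v y' j')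
          = if y' = y then v y j else 0 := by
        intro y' _
        by_cases h : y' = y
        · subst h
          simp [deltaV, Pi.single_apply, ite_mul]
        · simp [deltaV, h]
      rw [Finset.sum_congr rfl hterm, Finset.sum_ite_eq' S y (fun _ => v y j), if_pos hyS]
    rw [dsum f, dsum g] at h3
    exact h3
  · -- pre-injectivity of the transpose implies surjectivity
    intro hpre g
    classical
    have hker : LinearMap.ker (Tprime G τ hloc) = ⊥ := by
      rw [LinearMap.ker_eq_bot']
      intro l hl
      have hz : transposeOp (⇑τ) (fnOf l) = transposeOp (⇑τ) (0 : Γ → Fin r → K) := by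
        funext x i
        rw [transposeOp_zero G τ hloc]
        have := congrArg (fun m : (Γ × Fin r) →₀ K => m (x, i)) hl
        simpa [Tprime_apply] using this
      have hfin1 : (Function.support (fnOf l)).Finite := by
        apply Set.Finite.subset (l.support.image Prod.fst).finite_toSet
        intro y hy
        rw [Function.mem_support] at hy
        obtain ⟨j, hj⟩ := Function.ne_iff.1 hy
        exact Finset.mem_coe.2 (Finset.mem_image.2 ⟨(y, j), Finsupp.mem_support_iff.2 hj, rfl⟩)
      have h0 := hpre (fnOf l) 0 hfin1 (by simp) hz
      ext q
      have := congrArg (fun v : Γ → Fin r → K => v q.1 q.2) h0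
      simpa [fnOf] using this
    obtain ⟨σ, hσ⟩ := LinearMap.exists_leftInverse_of_injective (Tprime G τ hloc) hker
    set φ : ((Γ × Fin r) →₀ K) →ₗ[K] K :=
      Finsupp.linearCombination K (fun p : Γ × Fin r => g p.1 p.2) with hφ
    set ψ := φ.comp σ with hψ
    set u : Γ → Fin r → K := fun x i => ψ (Finsupp.single (x, i) 1) with hudef
    refine ⟨u, ?_⟩
    funext y j
    show τ u y j = g y j
    have hS : ∀ z, deltaV y j (K := K) z ≠ 0 → z ∈ ({y} : Finset Γ) := by
      intro z hz
      rcases eq_or_ne z y with h | h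
      · simp [h]
      · exact absurd (by simp [deltaV, h]) hz
    have hT : ∀ y' ∈ ({y} : Finset Γ), ∀ x, x = y' ∨ G.Adj y' x → x ∈ nbF G y := by
      intro y' hy' x hx
      rw [Finset.mem_singleton] at hy'
      subst hy'
      exact (mem_nbF G).2 hx
    have h1 := adj2 G τ hloc u (deltaV y j) {y} (nbF G y) hS hT
    have hLHS : ∑ y' ∈ ({y} : Finset Γ), ∑ j', τ u y' j' * deltaV y j y' j' = τ u y j := by
      rw [Finset.sum_singleton]
      simp [deltaV, Pi.single_apply, mul_ite]
    set ℓ : (Γ × Fin r) →₀ K := Tprime G τ hloc (Finsupp.single (y, j) 1) with hℓdef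
    have hℓ : ∀ x i, transposeOp (⇑τ) (deltaV y j) x i = ℓ (x, i) := by
      intro x i
      rw [hℓdef, Tprime_apply, fnOf_single]
    have hsupp : ℓ.support ⊆ (nbF G y) ×ˢ (Finset.univ : Finset (Fin r)) := by
      intro q hq
      rw [Finsupp.mem_support_iff] at hq
      have hq' : transposeOp (⇑τ) (deltaV y j) q.1 q.2 ≠ 0 := by
        rw [hℓ q.1 q.2]
        simpa using hq
      have hmem : q.1 ∈ ({y} : Finset Γ).biUnion (nbF G) := by
        by_contra hx
        exact hq' (transposeOp_support G τ hloc (deltaV y j) {y} hS q.1 q.2 hx)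
      rw [Finset.mem_product]
      exact ⟨by simpa [Finset.mem_biUnion] using hmem, Finset.mem_univ _⟩
    have e1 : ∀ x i, u x i * transposeOp (⇑τ) (deltaV y j) x i
        = ψ (ℓ (x, i) • Finsupp.single (x, i) 1) := by
      intro x i
      rw [hℓ, map_smul, smul_eq_mul, hudef, mul_comm]
    have e2 : ψ (∑ x ∈ nbF G y, ∑ i, ℓ (x, i) • Finsupp.single (x, i) (1 : K))
        = ∑ x ∈ nbF G y, ∑ i, ψ (ℓ (x, i) • Finsupp.single (x, i) 1) := by
      rw [map_sum]
      exact Finset.sum_congr rfl fun x _ => map_sum ψ _ _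
    have e3 : ∑ x ∈ nbF G y, ∑ i, ℓ (x, i) • Finsupp.single (x, i) (1 : K) = ℓ :=
      (Finset.sum_product (nbF G y) Finset.univ
        (fun p => ℓ p • Finsupp.single p (1 : K))).symm.trans (sum_single_eq ℓ _ hsupp)
    have hσℓ : σ ℓ = Finsupp.single (y, j) 1 := by
      rw [hℓdef]
      exact LinearMap.congr_fun hσ (Finsupp.single (y, j) 1)
    have hRHS : ∑ x ∈ nbF G y, ∑ i, u x i * transposeOp (⇑τ) (deltaV y j) x i = g y j := by
      calc ∑ x ∈ nbF G y, ∑ i, u x i * transposeOp (⇑τ) (deltaV y j) x i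
          = ∑ x ∈ nbF G y, ∑ i, ψ (ℓ (x, i) • Finsupp.single (x, i) 1) := by
            exact Finset.sum_congr rfl fun x _ => Finset.sum_congr rfl fun i _ => e1 x i
        _ = ψ ℓ := by rw [← e2, e3]
        _ = φ (σ ℓ) := rfl
        _ = φ (Finsupp.single (y, j) 1) := by rw [hσℓ]
        _ = g y j := by rw [hφ]; simp [Finsupp.linearCombination_single]
    rw [hLHS, hRHS] at h1
    exact h1
end

section
/- Let V be a finite-dimensional vector space over a field, let Γ be a connected, locally finite graph with a distinguished vertex e, and let τ : V^Γ → V^Γ be a locally specifiable linear map. Suppose f : Γ → V is such that for every n there exists v_n : Γ → V with τ(v_n) agreeing with f on the ball B(n) of radius n about e. Then there exists w : Γ → V with τ(w) = f. -/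
open Classical

/-- The ball of radius `n` about `e` in a graph. -/
def LGraph.ball {Γ : Type*} (G : LGraph Γ) (e : Γ) : ℕ → Set Γ
  | 0 => {e}
  | n + 1 => LGraph.ball G e n ∪ {z | ∃ u ∈ LGraph.ball G e n, G.Adj u z}

namespace LGraphAux

variable {Γ : Type*} (G : LGraph Γ) (e : Γ)

lemma ball_succ_subset (n : ℕ) : G.ball e n ⊆ G.ball e (n+1) := fun _ hz => Or.inl hz

lemma ball_mono {k l : ℕ} (h : k ≤ l) : G.ball e k ⊆ G.ball e l := by
  induction l, h using Nat.le_induction with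
  | base => exact le_refl _
  | succ l _ ih => exact ih.trans (ball_succ_subset G e l)

lemma adj_mem_ball {x y : Γ} {n : ℕ} (hx : x ∈ G.ball e n) (hxy : G.Adj x y) :
    y ∈ G.ball e (n+1) := Or.inr ⟨x, hx, hxy⟩

lemma ball_finite (n : ℕ) : (G.ball e n).Finite := by
  induction n with
  | zero => exact Set.finite_singleton e
  | succ n ih =>
    refine ih.union ?_
    have : {z | ∃ u ∈ G.ball e n, G.Adj u z} = ⋃ u ∈ G.ball e n, {z | G.Adj u z} := by
      ext z; simp
    rw [this]
    exact ih.biUnion fun u _ => G.locFin u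

lemma exists_mem_ball {x : Γ} (h : Relation.ReflTransGen G.Adj e x) :
    ∃ n, x ∈ G.ball e n := by
  induction h with
  | refl => exact ⟨0, rfl⟩
  | tail _ hadj ih =>
    obtain ⟨n, hn⟩ := ih
    exact ⟨n + 1, Or.inr ⟨_, hn, hadj⟩⟩

variable {K V : Type*} [Field K] [AddCommGroup V] [Module K V]

/-- pairs (v,c) with τ v = c • f on the ball of radius n -/
noncomputable def approxMod (τ : (Γ → V) →ₗ[K] (Γ → V)) (f : Γ → V) (n : ℕ) :
    Submodule K ((Γ → V) × K) where
  carrier := {p | ∀ x ∈ G.ball e n, τ p.1 x = p.2 • f x}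
  add_mem' := by
    intro a b ha hb x hx
    show τ (a.1 + b.1) x = (a.2 + b.2) • f x
    rw [map_add, Pi.add_apply, ha x hx, hb x hx, add_smul]
  zero_mem' := by intro x hx; simp
  smul_mem' := by
    intro c a ha x hx
    show τ (c • a.1) x = (c • a.2) • f x
    rw [map_smul, Pi.smul_apply, ha x hx, smul_smul, smul_eq_mul]

lemma mem_approxMod {τ : (Γ → V) →ₗ[K] (Γ → V)} {f : Γ → V} {n : ℕ}
    {p : (Γ → V) × K} :
    p ∈ approxMod G e τ f n ↔ ∀ x ∈ G.ball e n, τ p.1 x = p.2 • f x := Iff.rfl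

/-- restriction to a ball -/
noncomputable def resMap (n : ℕ) :
    ((Γ → V) × K) →ₗ[K] ((↥(G.ball e n) → V) × K) :=
  (LinearMap.funLeft K V (fun z : ↥(G.ball e n) => (z : Γ))).prodMap LinearMap.id

/-- restriction from a bigger ball to a smaller one -/
noncomputable def stepMap (n : ℕ) :
    ((↥(G.ball e (n+1)) → V) × K) →ₗ[K] ((↥(G.ball e n) → V) × K) :=
  (LinearMap.funLeft K V
    (fun z : ↥(G.ball e n) => (⟨z, ball_succ_subset G e n z.2⟩ : ↥(G.ball e (n+1))))).prodMap
    LinearMap.id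

lemma res_comp (n : ℕ) : resMap (K := K) (V := V) G e n = (stepMap G e n).comp (resMap G e (n+1)) :=
  LinearMap.ext fun _ => rfl

end LGraphAux

/-- Closure lemma (Ceccherini-Silberstein–Coornaert): if `f` agrees on every
ball with some element of the image of a locally specifiable linear map `τ` on a
connected, locally finite graph, then `f` itself lies in the image of `τ`. -/
theorem image_closed_of_approx {Γ K V : Type*} [Field K] [AddCommGroup V]
    [Module K V] [FiniteDimensional K V]
    (G : LGraph Γ) (e : Γ)
    (hconn : ∀ x : Γ, Relation.ReflTransGen G.Adj e x)
    (τ : (Γ → V) →ₗ[K] (Γ → V)) (hloc : LocallySpecifiable G τ)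
    (f : Γ → V)
    (happrox : ∀ n : ℕ, ∃ v : Γ → V, ∀ x ∈ G.ball e n, τ v x = f x) :
    ∃ w : Γ → V, τ w = f := by
  classical
  open LGraphAux in
  -- abbreviations
  set U : ℕ → Submodule K ((Γ → V) × K) := approxMod G e τ f with hUdef
  have hU_anti : ∀ {k l : ℕ}, k ≤ l → U l ≤ U k := by
    intro k l h p hp x hx
    exact hp x (ball_mono G e h hx)
  -- stabilization of projected submodules
  have hstab : ∀ n : ℕ, ∃ M : ℕ, ∀ m, M ≤ m →
      (U m).map (resMap G e n) = (U M).map (resMap G e n) := by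
    intro n
    haveI := (ball_finite G e n).to_subtype
    haveI : IsArtinian K ((↥(G.ball e n) → V) × K) := inferInstance
    have mono : Monotone (fun m => OrderDual.toDual ((U m).map (resMap G e n))) := by
      intro a b hab
      exact Submodule.map_mono (hU_anti hab)
    obtain ⟨M, hM⟩ := IsArtinian.monotone_stabilizes
      (⟨fun m => OrderDual.toDual ((U m).map (resMap G e n)), mono⟩ : ℕ →o _ᵒᵈ)
    exact ⟨M, fun m hm => (congrArg OrderDual.ofDual (hM m hm)).symm⟩
  choose M hM using hstab
  set L : ∀ n : ℕ, Submodule K ((↥(G.ball e n) → V) × K) :=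
    fun n => (U (M n)).map (resMap G e n) with hLdef
  have hLlim : ∀ n m, M n ≤ m → (U m).map (resMap G e n) = L n := fun n m hm => hM n m hm
  -- compatibility of the limit submodules
  have hcomp : ∀ n, (L (n+1)).map (stepMap G e n) = L n := by
    intro n
    have h1 : (U (max (M n) (M (n+1)))).map (resMap G e (n+1)) = L (n+1) :=
      hLlim (n+1) _ (le_max_right _ _)
    have h2 : (U (max (M n) (M (n+1)))).map (resMap G e n) = L n :=
      hLlim n _ (le_max_left _ _)
    rw [← h1, ← h2, res_comp G e n, Submodule.map_comp]
  -- step choice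
  have hstep : ∀ n (p : (↥(G.ball e n) → V) × K), p ∈ L n →
      ∃ q, q ∈ L (n+1) ∧ stepMap G e n q = p := by
    intro n p hp
    rw [← hcomp n] at hp
    obtain ⟨q, hq, hqp⟩ := hp
    exact ⟨q, hq, hqp⟩
  choose step hstep1 hstep2 using hstep
  -- base point with second coordinate 1
  obtain ⟨v0, hv0⟩ := happrox (M 0)
  have hv0U : ((v0, (1 : K)) : (Γ → V) × K) ∈ U (M 0) := by
    intro x hx
    show τ v0 x = (1 : K) • f x
    rw [one_smul]; exact hv0 x hx
  have hbase : resMap G e 0 (v0, (1 : K)) ∈ L 0 := Submodule.mem_map_of_mem hv0U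
  -- the compatible sequence
  set g : ∀ n : ℕ, {p : (↥(G.ball e n) → V) × K // p ∈ L n} :=
    fun n => Nat.rec ⟨resMap G e 0 (v0, 1), hbase⟩
      (fun k prev => ⟨step k prev.1 prev.2, hstep1 k prev.1 prev.2⟩) n with hgdef
  have hgρ : ∀ n, stepMap G e n (g (n+1)).1 = (g n).1 := fun n =>
    hstep2 n (g n).1 (g n).2
  have hgsnd : ∀ n, (g n).1.2 = 1 := by
    intro n
    induction n with
    | zero => rfl
    | succ n ih =>
      have h := congrArg Prod.snd (hgρ n)
      have h2 : (g (n+1)).1.2 = (g n).1.2 := h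
      rw [h2, ih]
  have hgc : ∀ k l (h : k ≤ l) (z : Γ) (hz : z ∈ G.ball e k),
      (g l).1.1 ⟨z, ball_mono G e h hz⟩ = (g k).1.1 ⟨z, hz⟩ := by
    intro k l h
    induction l, h using Nat.le_induction with
    | base => intro z hz; rfl
    | succ l hkl ih =>
      intro z hz
      have h1 := congrArg (fun q : (↥(G.ball e l) → V) × K =>
        q.1 ⟨z, ball_mono G e hkl hz⟩) (hgρ l)
      have h2 : (g (l+1)).1.1 ⟨z, ball_mono G e (hkl.trans (Nat.le_succ l)) hz⟩
          = (g l).1.1 ⟨z, ball_mono G e hkl hz⟩ := h1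
      rw [h2, ih]
  -- the solution
  set w : Γ → V := fun x =>
    if h : ∃ n, x ∈ G.ball e n then (g (Nat.find h)).1.1 ⟨x, Nat.find_spec h⟩ else 0
    with hwdef
  have hw : ∀ (n : ℕ) (z : Γ) (hz : z ∈ G.ball e n), w z = (g n).1.1 ⟨z, hz⟩ := by
    intro n z hz
    have hex : ∃ m, z ∈ G.ball e m := ⟨n, hz⟩
    have hle : Nat.find hex ≤ n := Nat.find_min' hex hz
    have := hgc (Nat.find hex) n hle z (Nat.find_spec hex)
    rw [hwdef]
    simp only [dif_pos hex]
    rw [← this]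
  refine ⟨w, ?_⟩
  funext x
  obtain ⟨n, hn⟩ := exists_mem_ball G e (hconn x)
  -- pull back g (n+1) to an actual pair (v, c) ∈ U m
  have hmem : (g (n+1)).1 ∈ (U (max (M (n+1)) (n+1))).map (resMap G e (n+1)) := by
    rw [hLlim (n+1) _ (le_max_left _ _)]
    exact (g (n+1)).2
  obtain ⟨p, hpU, hpπ⟩ := hmem
  have hpsnd : p.2 = 1 := by
    have h := congrArg Prod.snd hpπ
    have h2 : p.2 = (g (n+1)).1.2 := h
    rw [h2, hgsnd]
  have hagree : ∀ z ∈ G.ball e (n+1), w z = p.1 z := by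
    intro z hz
    have h1 := congrArg (fun q : (↥(G.ball e (n+1)) → V) × K => q.1 ⟨z, hz⟩) hpπ
    have h2 : p.1 z = (g (n+1)).1.1 ⟨z, hz⟩ := h1
    rw [h2, hw (n+1) z hz]
  have hx1 : x ∈ G.ball e (n+1) := ball_succ_subset G e n hn
  have hτ : τ w x = τ p.1 x := by
    apply hloc
    · exact hagree x hx1
    · intro y hxy
      exact hagree y (adj_mem_ball G e hn hxy)
  rw [hτ]
  have hxm : x ∈ G.ball e (max (M (n+1)) (n+1)) :=
    ball_mono G e ((Nat.le_succ n).trans (le_max_right _ _)) hn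
  have := hpU x hxm
  rw [this, hpsnd, one_smul]
end

section
/- The Laplacian on an infinite, connected, locally finite weighted graph Γ is surjective as a linear map from ℝ^Γ to ℝ^Γ. -/
/-- A weighted graph: undirected, loopless, locally finite, with symmetric
positive edge weights. -/
structure WGraph (V : Type*) where
  Adj : V → V → Prop
  symm : ∀ {x y}, Adj x y → Adj y x
  loopless : ∀ x, ¬ Adj x x
  w : V → V → ℝ
  w_symm : ∀ x y, w x y = w y x
  w_pos : ∀ {x y}, Adj x y → 0 < w x y
  locFin : ∀ x, {y | Adj x y}.Finite

namespace WGraph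

variable {V : Type*} (G : WGraph V)

/-- The (weighted) degree of a vertex. -/
noncomputable def deg (x : V) : ℝ := ∑ᶠ y ∈ {y | G.Adj x y}, G.w x y

/-- The Laplacian `Δf(x) = f(x) - (1/deg x) ∑_{y∼x} ω_{xy} f(y)`. -/
noncomputable def lap (f : V → ℝ) (x : V) : ℝ :=
  f x - (1 / G.deg x) * ∑ᶠ y ∈ {y | G.Adj x y}, G.w x y * f y

/-- `f` is harmonic on `G`. -/
def Harmonic (f : V → ℝ) : Prop := ∀ x, G.lap f x = 0

end WGraph

namespace WGraph

variable {V : Type*} (G : WGraph V)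

open scoped Classical

noncomputable def nbr (x : V) : Finset V := (G.locFin x).toFinset

lemma mem_nbr {x y : V} : y ∈ G.nbr x ↔ G.Adj x y := by
  simp [nbr]

lemma deg_eq (x : V) : G.deg x = ∑ y ∈ G.nbr x, G.w x y := by
  rw [deg, ← (G.locFin x).coe_toFinset, finsum_mem_coe_finset]; rfl

lemma lap_eq (f : V → ℝ) (x : V) :
    G.lap f x = f x - (1 / G.deg x) * ∑ y ∈ G.nbr x, G.w x y * f y := by
  rw [lap, ← (G.locFin x).coe_toFinset, finsum_mem_coe_finset]; rfl

lemma deg_pos [Infinite V] (hconn : ∀ x y : V, Relation.ReflTransGen G.Adj x y)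
    (x : V) : 0 < G.deg x := by
  obtain ⟨y, hyx⟩ := exists_ne x
  rcases (hconn x y).cases_head with h | ⟨z, hxz, -⟩
  · exact absurd h.symm hyx
  · rw [deg_eq]
    exact Finset.sum_pos (fun y hy => G.w_pos (G.mem_nbr.mp hy))
      ⟨z, G.mem_nbr.mpr hxz⟩


/-- Maximum principle half: a finitely supported "harmonic" function is ≤ 0. -/
lemma harmonic_nonpos [Infinite V] (hconn : ∀ x y : V, Relation.ReflTransGen G.Adj x y)
    (u : V → ℝ)
    (hu : ∀ x, u x = (1 / G.deg x) * ∑ y ∈ G.nbr x, G.w x y * u y)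
    (hs : {x | u x ≠ 0}.Finite) : ∀ x, u x ≤ 0 := by
  by_contra hcon
  push_neg at hcon
  obtain ⟨x₀, hx₀⟩ := hcon
  set s := hs.toFinset with hsdef
  have hx₀s : x₀ ∈ s := hs.mem_toFinset.mpr hx₀.ne'
  have hne : s.Nonempty := ⟨x₀, hx₀s⟩
  set M := s.sup' hne u with hMdef
  have hMpos : 0 < M := lt_of_lt_of_le hx₀ (Finset.le_sup' u hx₀s)
  have hub : ∀ z, u z ≤ M := by
    intro z
    by_cases hz : u z ≠ 0
    · exact Finset.le_sup' u (hs.mem_toFinset.mpr hz)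
    · push_neg at hz; rw [hz]; exact hMpos.le
  have step : ∀ x y, u x = M → G.Adj x y → u y = M := by
    intro x y hx hxy
    refine le_antisymm (hub y) ?_
    by_contra hlt
    push_neg at hlt
    have hdx := G.deg_pos hconn x
    have hsum : ∑ z ∈ G.nbr x, G.w x z * u z < ∑ z ∈ G.nbr x, G.w x z * M :=
      Finset.sum_lt_sum
        (fun i hi => mul_le_mul_of_nonneg_left (hub i) (G.w_pos (G.mem_nbr.mp hi)).le)
        ⟨y, G.mem_nbr.mpr hxy, mul_lt_mul_of_pos_left hlt (G.w_pos hxy)⟩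
    have h2 : ∑ z ∈ G.nbr x, G.w x z * M = G.deg x * M := by
      rw [G.deg_eq, Finset.sum_mul]
    have h3 : (1 / G.deg x) * ∑ z ∈ G.nbr x, G.w x z * u z
        < (1 / G.deg x) * (G.deg x * M) := by
      rw [← h2]; exact mul_lt_mul_of_pos_left hsum (by positivity)
    have hM' : (1 / G.deg x) * (G.deg x * M) = M := by field_simp
    rw [hM'] at h3
    rw [← hu x, hx] at h3
    exact lt_irrefl M h3
  obtain ⟨x₁, hx₁s, hx₁⟩ := Finset.exists_mem_eq_sup' hne u
  have hall : ∀ y, u y = M := by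
    intro y
    induction hconn x₁ y with
    | refl => exact hx₁.symm
    | tail _ hbc ih => exact step _ _ ih hbc
  obtain ⟨y, hy⟩ := Infinite.exists_notMem_finset s
  have hy0 : u y = 0 := by
    by_contra h; exact hy (hs.mem_toFinset.mpr h)
  rw [hall y] at hy0
  exact absurd hy0 hMpos.ne'

/-- A finitely supported harmonic function vanishes. -/
lemma harmonic_eq_zero [Infinite V] (hconn : ∀ x y : V, Relation.ReflTransGen G.Adj x y)
    (u : V → ℝ)
    (hu : ∀ x, u x = (1 / G.deg x) * ∑ y ∈ G.nbr x, G.w x y * u y)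
    (hs : {x | u x ≠ 0}.Finite) : ∀ x, u x = 0 := by
  have h1 := G.harmonic_nonpos hconn u hu hs
  have h2 := G.harmonic_nonpos hconn (fun x => -u x)
    (by intro x
        have := hu x
        simp only [mul_neg, Finset.sum_neg_distrib]
        linarith)
    (by refine hs.subset ?_; intro x hx; simpa using hx)
  intro x
  have := h2 x
  simp only [neg_nonpos] at this
  exact le_antisymm (h1 x) this


/-- The row of the transition operator at `x`, as a finitely supported function. -/
noncomputable def row (x : V) : V →₀ ℝ :=
  Finsupp.ofSupportFinite (fun y => if G.Adj x y then G.w x y / G.deg x else 0)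
    ((G.locFin x).subset (by
      intro y hy
      simp only [Function.mem_support] at hy
      by_contra h
      exact hy (if_neg h)))

lemma row_apply (x y : V) :
    G.row x y = if G.Adj x y then G.w x y / G.deg x else 0 := rfl

lemma row_support_subset (x : V) : (G.row x).support ⊆ G.nbr x := by
  intro y hy
  rw [Finsupp.mem_support_iff, row_apply] at hy
  rw [G.mem_nbr]
  by_contra h
  exact hy (if_neg h)

/-- The transition operator on finitely supported functions. -/
noncomputable def T : (V →₀ ℝ) →ₗ[ℝ] (V →₀ ℝ) :=
  Finsupp.lsum ℝ fun x => LinearMap.smulRight LinearMap.id (G.row x)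

/-- The adjoint of the Laplacian on finitely supported functions. -/
noncomputable def Lop : (V →₀ ℝ) →ₗ[ℝ] (V →₀ ℝ) := LinearMap.id - G.T

lemma T_single (x : V) : G.T (Finsupp.single x 1) = G.row x := by
  simp [T]

/-- Pairing of an arbitrary function with a finitely supported one. -/
noncomputable def pair (f : V → ℝ) : (V →₀ ℝ) →ₗ[ℝ] ℝ :=
  Finsupp.lsum ℝ fun y => LinearMap.smulRight LinearMap.id (f y)

lemma pair_single (f : V → ℝ) (y : V) (c : ℝ) :
    pair f (Finsupp.single y c) = c * f y := by
  simp [pair]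

lemma pair_row (f : V → ℝ) (x : V) :
    pair f (G.row x) = (1 / G.deg x) * ∑ y ∈ G.nbr x, G.w x y * f y := by
  rw [pair, Finsupp.lsum_apply]
  rw [Finsupp.sum_of_support_subset _ (G.row_support_subset x) _
    (fun i _ => by simp)]
  rw [Finset.mul_sum]
  refine Finset.sum_congr rfl fun y hy => ?_
  rw [LinearMap.smulRight_apply, LinearMap.id_apply, smul_eq_mul,
    row_apply, if_pos (G.mem_nbr.mp hy)]
  ring

lemma lap_eq_pair (f : V → ℝ) (x : V) :
    G.lap f x = pair f (G.Lop (Finsupp.single x 1)) := by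
  rw [Lop, LinearMap.sub_apply, LinearMap.id_apply, map_sub, T_single,
    pair_single, pair_row, one_mul, lap_eq]


lemma Lop_ker [Infinite V] (hconn : ∀ x y : V, Relation.ReflTransGen G.Adj x y) :
    LinearMap.ker G.Lop = ⊥ := by
  rw [LinearMap.ker_eq_bot']
  intro h hh
  set u : V → ℝ := fun x => h x / G.deg x with hudef
  have key : ∀ y, h y = ∑ x ∈ h.support ∪ G.nbr y, h x * G.row x y := by
    intro y
    have h0 : G.Lop h = 0 := hh
    have h1 : h y = G.T h y := by
      have := DFunLike.congr_fun h0 y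
      simp only [Lop, LinearMap.sub_apply, LinearMap.id_apply, Finsupp.sub_apply,
        Finsupp.coe_zero, Pi.zero_apply] at this
      linarith
    rw [h1, T, Finsupp.lsum_apply, Finsupp.sum_apply]
    rw [Finsupp.sum]
    simp only [LinearMap.smulRight_apply, LinearMap.id_apply, Finsupp.smul_apply,
      smul_eq_mul]
    exact Finset.sum_subset Finset.subset_union_left
      (fun x _ hx => by rw [Finsupp.notMem_support_iff.mp hx, zero_mul])
  have hharm : ∀ y, u y = (1 / G.deg y) * ∑ x ∈ G.nbr y, G.w y x * u x := by
    intro y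
    have h2 : ∑ x ∈ h.support ∪ G.nbr y, h x * G.row x y
        = ∑ x ∈ G.nbr y, G.w y x * u x := by
      rw [← Finset.sum_subset Finset.subset_union_right
        (fun x _ hx => by
          rw [row_apply, if_neg (fun hadj => hx (G.mem_nbr.mpr (G.symm hadj))), mul_zero])]
      refine Finset.sum_congr rfl fun x hx => ?_
      rw [row_apply, if_pos (G.symm (G.mem_nbr.mp hx)), G.w_symm y x]
      show h x * (G.w x y / G.deg x) = G.w x y * (h x / G.deg x)
      ring
    have h3 : h y = ∑ x ∈ G.nbr y, G.w y x * u x := (key y).trans h2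
    show h y / G.deg y = _
    rw [h3]
    ring
  have hsupp : {x | u x ≠ 0}.Finite := by
    refine (h.finite_support).subset ?_
    intro x hx
    simp only [Set.mem_setOf_eq, hudef] at hx
    simp only [Function.mem_support]
    intro h0
    exact hx (by rw [h0, zero_div])
  have hz := G.harmonic_eq_zero hconn u hharm hsupp
  ext x
  have := hz x
  rw [hudef] at this
  simp only [Finsupp.coe_zero, Pi.zero_apply]
  have hd := (G.deg_pos hconn x).ne'
  field_simp at this
  simpa using this

end WGraph

/-- The Laplacian on an infinite, connected, locally finite weighted graph is
surjective as a linear map `ℝ^Γ → ℝ^Γ`. -/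
theorem laplacian_surjective {V : Type*} [Infinite V] (G : WGraph V)
    (hconn : ∀ x y : V, Relation.ReflTransGen G.Adj x y) :
    ∀ g : V → ℝ, ∃ f : V → ℝ, ∀ x : V, G.lap f x = g x := by
  intro g
  obtain ⟨S, hS⟩ := G.Lop.exists_leftInverse_of_injective (G.Lop_ker hconn)
  set f : V → ℝ := fun x => WGraph.pair g (S (Finsupp.single x 1)) with hfdef
  refine ⟨f, fun x => ?_⟩
  have hpair : WGraph.pair f = (WGraph.pair g).comp S := by
    refine Finsupp.lhom_ext fun y b => ?_
    rw [LinearMap.comp_apply]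
    have hsingle : Finsupp.single y b = b • Finsupp.single y (1:ℝ) := by
      rw [Finsupp.smul_single', mul_one]
    simp only [hsingle, map_smul, smul_eq_mul, WGraph.pair_single, one_mul, hfdef]
  rw [G.lap_eq_pair, hpair, LinearMap.comp_apply, ← LinearMap.comp_apply S,
    hS, LinearMap.id_apply, WGraph.pair_single, one_mul]
end

section
/- Let G be an infinite group and μ a (not necessarily symmetric) finitely supported generating probability measure on G. Then the Laplacian Δ_μ, defined by Δ_μ f(x) = f(x) − Σ_{s} μ(s) f(xs), is surjective as a linear map ℝ^G → ℝ^G. -/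
theorem group_laplacian_surjective {G : Type*} [Group G] [Infinite G]
    (μ : G →₀ ℝ)
    (hpos : ∀ s, 0 ≤ μ s)
    (hsum : μ.sum (fun _ v => v) = 1)
    (hgen : Subsemigroup.closure (μ.support : Set G) = ⊤) :
    ∀ g : G → ℝ, ∃ f : G → ℝ, ∀ x : G,
      f x - ∑ s ∈ μ.support, μ s * f (x * s) = g x := by
  classical
  intro g
  -- The "pre-dual" operator on finitely supported functions
  set T : (G →₀ ℝ) →ₗ[ℝ] (G →₀ ℝ) :=
    LinearMap.id - ∑ s ∈ μ.support, μ s • Finsupp.lmapDomain ℝ ℝ (· * s) with hT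
  have hmd : ∀ (φ : G →₀ ℝ) (s y : G), Finsupp.mapDomain (· * s) φ y = φ (y * s⁻¹) := by
    intro φ s y
    have := Finsupp.mapDomain_apply (mul_left_injective s) φ (y * s⁻¹)
    simpa [mul_assoc] using this
  have hTapply : ∀ (φ : G →₀ ℝ) (y : G),
      T φ y = φ y - ∑ s ∈ μ.support, μ s * φ (y * s⁻¹) := by
    intro φ y
    simp only [hT, LinearMap.sub_apply, LinearMap.id_apply, LinearMap.sum_apply,
      LinearMap.smul_apply, Finsupp.lmapDomain_apply, Finsupp.sub_apply,
      Finsupp.coe_finset_sum, Finset.sum_apply, Finsupp.smul_apply, smul_eq_mul]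
    congr 1
    exact Finset.sum_congr rfl fun s _ => by rw [hmd]
  have hsum' : ∑ s ∈ μ.support, μ s = 1 := hsum
  -- Maximum principle: any finitely supported harmonic function is ≤ 0
  have hkey : ∀ ψ : G →₀ ℝ, T ψ = 0 → ∀ a, ψ a ≤ 0 := by
    intro ψ hψ a
    by_contra hpos'
    push_neg at hpos'
    have ha : a ∈ ψ.support := by
      rw [Finsupp.mem_support_iff]; exact ne_of_gt hpos'
    have hne : ψ.support.Nonempty := ⟨a, ha⟩
    set M := ψ.support.sup' hne ψ with hM
    have hMpos : 0 < M := lt_of_lt_of_le hpos' (Finset.le_sup' ψ ha)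
    have hle : ∀ z, ψ z ≤ M := by
      intro z
      by_cases hz : z ∈ ψ.support
      · exact Finset.le_sup' ψ hz
      · rw [Finsupp.notMem_support_iff.mp hz]; exact le_of_lt hMpos
    have hharm : ∀ y, ψ y = ∑ s ∈ μ.support, μ s * ψ (y * s⁻¹) := by
      intro y
      have h0 := hTapply ψ y
      rw [hψ] at h0
      simp only [Finsupp.coe_zero, Pi.zero_apply] at h0
      linarith
    have hA : ∀ y, ψ y = M → ∀ s ∈ μ.support, ψ (y * s⁻¹) = M := by
      intro y hy s hs
      have hsums : ∑ s ∈ μ.support, μ s * ψ (y * s⁻¹) = ∑ s ∈ μ.support, μ s * M := by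
        rw [← hharm y, ← Finset.sum_mul, hsum', one_mul, hy]
      have heach := (Finset.sum_eq_sum_iff_of_le
        (fun i _ => mul_le_mul_of_nonneg_left (hle _) (hpos i))).mp hsums s hs
      have hμs : μ s ≠ 0 := Finsupp.mem_support_iff.mp hs
      exact mul_left_cancel₀ hμs heach
    have hAclos : ∀ w ∈ Subsemigroup.closure (μ.support : Set G),
        ∀ y, ψ y = M → ψ (y * w⁻¹) = M := by
      intro w hw
      induction hw using Subsemigroup.closure_induction with
      | mem s hs => exact fun y hy => hA y hy s hs
      | mul x y _ _ hx hy =>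
          intro z hz
          have : z * (x * y)⁻¹ = (z * y⁻¹) * x⁻¹ := by group
          rw [this]
          exact hx _ (hy z hz)
    obtain ⟨y₀, hy₀mem, hy₀⟩ := Finset.exists_mem_eq_sup' hne ψ
    have hall : ∀ w : G, ψ (y₀ * w⁻¹) = M := by
      intro w
      have hw : w ∈ Subsemigroup.closure (μ.support : Set G) := by
        rw [hgen]; trivial
      exact hAclos w hw y₀ hy₀.symm
    have hinj' : Function.Injective (fun w : G => y₀ * w⁻¹) := by
      intro a b h
      have := mul_left_cancel h
      exact inv_injective this
    have hmem : ∀ w : G, y₀ * w⁻¹ ∈ (ψ.support : Set G) := by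
      intro w
      rw [Finset.mem_coe, Finsupp.mem_support_iff, hall w]
      exact ne_of_gt hMpos
    exact (Set.infinite_of_injective_forall_mem hinj' hmem)
      (ψ.support.finite_toSet)
  -- T is injective
  have hinj : Function.Injective T := by
    intro φ1 φ2 h12
    have h0 : T (φ1 - φ2) = 0 := by rw [map_sub, h12, sub_self]
    have h0' : T (-(φ1 - φ2)) = 0 := by rw [map_neg, h0, neg_zero]
    ext a
    have h1 := hkey _ h0 a
    have h2 := hkey _ h0' a
    simp only [Finsupp.sub_apply, Finsupp.neg_apply] at h1 h2
    linarith
  -- the dual map is surjective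
  obtain ⟨Ψ, hΨ⟩ := (LinearMap.dualMap_surjective_of_injective hinj)
    (Finsupp.linearCombination ℝ g)
  refine ⟨fun x => Ψ (Finsupp.single x 1), fun x => ?_⟩
  have hTx : T (Finsupp.single x 1)
      = Finsupp.single x 1 - ∑ s ∈ μ.support, μ s • Finsupp.single (x * s) 1 := by
    simp only [hT, LinearMap.sub_apply, LinearMap.id_apply, LinearMap.sum_apply,
      LinearMap.smul_apply, Finsupp.lmapDomain_apply, Finsupp.mapDomain_single]
  have hx := congrArg (fun Φ : Module.Dual ℝ (G →₀ ℝ) => Φ (Finsupp.single x 1)) hΨ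
  simp only [LinearMap.dualMap_apply] at hx
  rw [hTx] at hx
  rw [map_sub, map_sum] at hx
  simp only [map_smul, smul_eq_mul, Finsupp.linearCombination_single, one_smul] at hx
  simpa using hx
end

section
/- Let Γ be a locally finite weighted graph and X ⊂ Γ a finite subset. Then the image Δ(ℝ^Γ_{Γ∖X}) of the space of functions supported on Γ∖X under the Laplacian equals all of Δ(ℝ^Γ) if and only if every function f : X → ℝ extends to a harmonic function on all of Γ. -/
namespace WGraph

variable {V : Type*} (G : WGraph V)

theorem lap_sub (a b : V → ℝ) (x : V) :
    G.lap (fun y => a y - b y) x = G.lap a x - G.lap b x := by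
  have hfin := G.locFin x
  simp only [WGraph.lap, mul_sub]
  rw [finsum_mem_sub_distrib _ _ hfin]
  ring

end WGraph

theorem image_laplacian_restricted_eq_iff_extension {V : Type*} (G : WGraph V)
    (X : Set V) (hX : X.Finite) :
    (fun f : V → ℝ => G.lap f) '' {f | ∀ x ∈ X, f x = 0} =
        (fun f : V → ℝ => G.lap f) '' Set.univ ↔
      ∀ f₀ : V → ℝ, ∃ h : V → ℝ, G.Harmonic h ∧ ∀ x ∈ X, h x = f₀ x := by
  constructor
  · intro h f₀
    have hmem : G.lap f₀ ∈ (fun f : V → ℝ => G.lap f) '' Set.univ :=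
      ⟨f₀, Set.mem_univ _, rfl⟩
    rw [← h] at hmem
    obtain ⟨f, hf, hlap⟩ := hmem
    refine ⟨fun y => f₀ y - f y, ?_, ?_⟩
    · intro x
      rw [G.lap_sub]
      have : G.lap f x = G.lap f₀ x := congrFun hlap x
      rw [← this]; ring
    · intro x hx
      simp [hf x hx]
  · intro h
    apply Set.Subset.antisymm (Set.image_mono (Set.subset_univ _))
    rintro v ⟨g, -, rfl⟩
    obtain ⟨hh, hharm, hagree⟩ := h g
    refine ⟨fun y => g y - hh y, ?_, ?_⟩
    · intro x hx
      simp [hagree x hx]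
    · funext x
      show G.lap (fun y => g y - hh y) x = G.lap g x
      rw [G.lap_sub]
      rw [hharm x]; ring
end

section
/- Let Γ be a locally finite vertex-transitive weighted graph and n ∈ ℕ. Then for all vertices x, y, the probability that the random walk started at x returns to x at time n without visiting y at any time 1,…,n−1 equals the probability that the random walk started at y returns to y at time n without visiting x at any time 1,…,n−1. -/
set_option maxHeartbeats 4000000


open Classical

namespace WGraph

variable {V : Type*} (G : WGraph V)

/-- A permutation of the vertices is an automorphism of the weighted graph if it
preserves adjacency and weights. -/
def IsAut (g : Equiv.Perm V) : Prop :=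
  ∀ x y : V, (G.Adj x y ↔ G.Adj (g x) (g y)) ∧ G.w (g x) (g y) = G.w x y

/-- The graph is vertex-transitive: automorphisms act transitively on vertices. -/
def VertexTransitive : Prop :=
  ∀ x y : V, ∃ g : Equiv.Perm V, G.IsAut g ∧ g x = y

/-- One-step transition probability of the random walk: `ω_{xy} / deg x`. -/
noncomputable def step (x y : V) : ℝ :=
  if G.Adj x y then G.w x y / G.deg x else 0

/-- The probability that the random walk follows the trajectory
`f 0, f 1, …, f n` (conditioned on starting at `f 0`). -/
noncomputable def trajProb {n : ℕ} (f : Fin (n + 1) → V) : ℝ :=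
  ∏ i : Fin n, G.step (f i.castSucc) (f i.succ)

/-- `P_x[T_y = n]`: the probability that the walk started at `x` first hits `y`
at time exactly `n`. -/
noncomputable def firstHitProb (x y : V) (n : ℕ) : ℝ :=
  ∑ᶠ f : Fin (n + 1) → V,
    if f 0 = x ∧ f (Fin.last n) = y ∧ (∀ i : Fin (n + 1), i ≠ Fin.last n → f i ≠ y)
    then G.trajProb f else 0

/-- `P_x[T_y < ∞]`: the probability that the walk started at `x` ever hits `y`. -/
noncomputable def hitProb (x y : V) : ℝ := ∑' n : ℕ, G.firstHitProb x y n

/-- The probability that the walk started at `e` first returns to `e` at time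
exactly `m`. -/
noncomputable def firstReturnProb (e : V) (m : ℕ) : ℝ :=
  ∑ᶠ f : Fin (m + 1) → V,
    if f 0 = e ∧ f (Fin.last m) = e ∧
        (∀ i : Fin (m + 1), i ≠ 0 → i ≠ Fin.last m → f i ≠ e)
    then G.trajProb f else 0

/-- The random walk is transient at `e`: the return probability is `< 1`. -/
noncomputable def Transient (e : V) : Prop :=
  ∑' n : ℕ, G.firstReturnProb e (n + 1) < 1

end WGraph

namespace WGraph

variable {V : Type*} (G : WGraph V)

/-! ### Basic invariance lemmas -/

lemma deg_aut {g : Equiv.Perm V} (hg : G.IsAut g) (x : V) : G.deg (g x) = G.deg x := by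
  have himg : {y | G.Adj (g x) y} = g '' {y | G.Adj x y} := by
    ext z
    simp only [Set.mem_setOf_eq, Set.mem_image]
    constructor
    · intro h
      refine ⟨g.symm z, ?_, g.apply_symm_apply z⟩
      have := (hg x (g.symm z)).1
      rw [this, g.apply_symm_apply]
      exact h
    · rintro ⟨w, hw, rfl⟩
      exact ((hg x w).1).mp hw
  rw [WGraph.deg, WGraph.deg, himg, finsum_mem_image (g.injective.injOn)]
  exact finsum_mem_congr rfl fun w _ => (hg x w).2

lemma deg_const (htrans : G.VertexTransitive) (x y : V) : G.deg x = G.deg y := by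
  obtain ⟨g, hg, hgx⟩ := htrans x y
  rw [← hgx]
  exact (G.deg_aut hg x).symm

lemma step_aut {g : Equiv.Perm V} (hg : G.IsAut g) (a b : V) :
    G.step (g a) (g b) = G.step a b := by
  rw [WGraph.step, WGraph.step, G.deg_aut hg, (hg a b).2]
  by_cases h : G.Adj a b
  · rw [if_pos (((hg a b).1).mp h), if_pos h]
  · rw [if_neg (fun hc => h (((hg a b).1).mpr hc)), if_neg h]

lemma step_symm (htrans : G.VertexTransitive) (a b : V) : G.step a b = G.step b a := by
  rw [WGraph.step, WGraph.step]
  by_cases h : G.Adj a b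
  · rw [if_pos h, if_pos (G.symm h), G.w_symm, deg_const G htrans a b]
  · rw [if_neg h, if_neg (fun hc => h (G.symm hc))]

lemma traj_aut {g : Equiv.Perm V} (hg : G.IsAut g) {n : ℕ} (f : Fin (n + 1) → V) :
    G.trajProb (g ∘ f) = G.trajProb f := by
  rw [WGraph.trajProb, WGraph.trajProb]
  exact Finset.prod_congr rfl fun i _ => G.step_aut hg _ _

lemma traj_rev (htrans : G.VertexTransitive) {n : ℕ} (f : Fin (n + 1) → V) :
    G.trajProb (f ∘ Fin.rev) = G.trajProb f := by
  rw [WGraph.trajProb, WGraph.trajProb]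
  have key : ∀ i : Fin n,
      G.step ((f ∘ Fin.rev) i.castSucc) ((f ∘ Fin.rev) i.succ)
        = G.step (f (Fin.revPerm i).castSucc) (f (Fin.revPerm i).succ) := by
    intro i
    have h1 : (i.castSucc).rev = (Fin.revPerm i).succ := by
      ext
      simp only [Fin.val_rev, Fin.val_succ, Fin.coe_castSucc, Fin.revPerm_apply]
      have := i.isLt
      omega
    have h2 : (i.succ).rev = (Fin.revPerm i).castSucc := by
      ext
      simp only [Fin.val_rev, Fin.val_succ, Fin.coe_castSucc, Fin.revPerm_apply]
      have := i.isLt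
      omega
    simp only [Function.comp_apply, h1, h2]
    exact G.step_symm htrans _ _
  rw [Finset.prod_congr rfl fun i _ => key i]
  exact Equiv.prod_comp Fin.revPerm fun j : Fin n => G.step (f j.castSucc) (f j.succ)

/-! ### Finiteness of the relevant path sets -/

/-- Vertices reachable from `x` in at most `k` steps. -/
def reach (x : V) : ℕ → Set V
  | 0 => {x}
  | k + 1 => reach x k ∪ ⋃ v ∈ reach x k, {w | G.Adj v w}

lemma reach_finite (x : V) (k : ℕ) : (G.reach x k).Finite := by
  induction k with
  | zero => exact Set.finite_singleton x
  | succ k ih => exact ih.union (ih.biUnion fun v _ => G.locFin v)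

lemma reach_le (x : V) {k m : ℕ} (h : k ≤ m) : G.reach x k ⊆ G.reach x m := by
  induction h with
  | refl => exact subset_rfl
  | step _ ih => exact ih.trans Set.subset_union_left

lemma mem_reach {x : V} {n : ℕ} {f : Fin (n + 1) → V} (h0 : f 0 = x)
    (hadj : ∀ i : Fin n, G.Adj (f i.castSucc) (f i.succ)) (i : Fin (n + 1)) :
    f i ∈ G.reach x n := by
  have key : ∀ m (hm : m < n + 1), f ⟨m, hm⟩ ∈ G.reach x m := by
    intro m
    induction m with
    | zero =>
      intro hm
      have : (⟨0, hm⟩ : Fin (n + 1)) = 0 := Fin.ext (by simp)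
      rw [this, h0]
      exact Set.mem_singleton x
    | succ m ih =>
      intro hm
      have h1 : m < n + 1 := by omega
      have h2 : m < n := by omega
      have hA : G.Adj (f ⟨m, h1⟩) (f ⟨m + 1, hm⟩) := hadj ⟨m, h2⟩
      exact Set.mem_union_right _ (Set.mem_biUnion (ih h1) hA)
  have hmem := key i.val i.isLt
  have : f ⟨i.val, i.isLt⟩ = f i := rfl
  rw [this] at hmem
  exact G.reach_le x (Nat.lt_succ_iff.mp i.isLt) hmem

/-- The set of admissible trajectories of length `n` starting at `x`. -/
def pathSet (x : V) (n : ℕ) : Set (Fin (n + 1) → V) :=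
  {f | f 0 = x ∧ ∀ i : Fin n, G.Adj (f i.castSucc) (f i.succ)}

lemma pathSet_finite (x : V) (n : ℕ) : (G.pathSet x n).Finite := by
  apply Set.Finite.subset (Set.Finite.pi fun _ : Fin (n + 1) => G.reach_finite x n)
  intro f hf
  simp only [Set.mem_pi, Set.mem_univ, forall_true_left]
  intro i
  exact G.mem_reach hf.1 hf.2 i

/-- The finite set of admissible trajectories of length `n` starting at `x`. -/
noncomputable def pset (x : V) (n : ℕ) : Finset (Fin (n + 1) → V) :=
  (G.pathSet_finite x n).toFinset

lemma adj_of_traj_ne_zero {n : ℕ} {f : Fin (n + 1) → V} (h : G.trajProb f ≠ 0) (i : Fin n) :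
    G.Adj (f i.castSucc) (f i.succ) := by
  by_contra hc
  exact h (Finset.prod_eq_zero (Finset.mem_univ i) (by rw [WGraph.step, if_neg hc]))

lemma sum_conv {n : ℕ} (x : V) (F : (Fin (n + 1) → V) → ℝ)
    (hF : ∀ f, F f ≠ 0 → f 0 = x ∧ G.trajProb f ≠ 0) :
    (∑ᶠ f : Fin (n + 1) → V, F f) = ∑ f ∈ G.pset x n, F f := by
  apply finsum_eq_sum_of_support_subset
  intro f hf
  simp only [Function.mem_support] at hf
  obtain ⟨h0, htra⟩ := hF f hf
  simp only [pset, Finset.coe_sort_coe, Set.Finite.coe_toFinset, pathSet, Set.mem_setOf_eq]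
  exact ⟨h0, fun i => G.adj_of_traj_ne_zero htra i⟩

lemma if_support {n : ℕ} {x : V} (R : (Fin (n + 1) → V) → Prop)
    (f : Fin (n + 1) → V) {D : Decidable (f 0 = x ∧ R f)}
    (h : (@ite _ (f 0 = x ∧ R f) D (G.trajProb f) 0) ≠ 0) :
    f 0 = x ∧ G.trajProb f ≠ 0 := by
  by_cases hc : f 0 = x ∧ R f
  · exact ⟨hc.1, by rwa [if_pos hc] at h⟩
  · rw [if_neg hc] at h
    exact absurd rfl h

/-! ### The basic `n`-step transition quantity -/

/-- `p_n(x,y)`: probability of going from `x` to `y` in exactly `n` steps. -/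
noncomputable def pp (n : ℕ) (x y : V) : ℝ :=
  ∑ᶠ f : Fin (n + 1) → V, if f 0 = x ∧ f (Fin.last n) = y then G.trajProb f else 0

lemma pp_zero_self (y : V) : G.pp 0 y y = 1 := by
  rw [WGraph.pp, finsum_eq_single _ (fun _ : Fin 1 => y)]
  · rw [if_pos ⟨rfl, rfl⟩, WGraph.trajProb]
    simp
  · intro f hf
    rw [if_neg]
    rintro ⟨h1, -⟩
    exact hf (funext fun i => by rw [Subsingleton.elim i 0]; exact h1)

/-- reversal equiv on trajectories -/
def revE (n : ℕ) : (Fin (n + 1) → V) ≃ (Fin (n + 1) → V) where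
  toFun f := f ∘ Fin.rev
  invFun f := f ∘ Fin.rev
  left_inv f := funext fun i => by simp [Fin.rev_rev]
  right_inv f := funext fun i => by simp [Fin.rev_rev]

/-- composition equiv on trajectories -/
def autE {n : ℕ} (g : Equiv.Perm V) : (Fin (n + 1) → V) ≃ (Fin (n + 1) → V) where
  toFun f := g ∘ f
  invFun f := g.symm ∘ f
  left_inv f := funext fun i => g.symm_apply_apply _
  right_inv f := funext fun i => g.apply_symm_apply _

lemma pp_symm (htrans : G.VertexTransitive) (n : ℕ) (x y : V) :
    G.pp n x y = G.pp n y x := by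
  rw [WGraph.pp, WGraph.pp,
    ← finsum_comp_equiv (revE (V := V) n)
      (f := fun f => if f 0 = x ∧ f (Fin.last n) = y then G.trajProb f else 0)]
  apply finsum_congr
  intro f
  have h0 : (revE (V := V) n) f 0 = f (Fin.last n) := by
    show f (Fin.rev 0) = f (Fin.last n)
    rw [Fin.rev_zero]
  have hl : (revE (V := V) n) f (Fin.last n) = f 0 := by
    show f (Fin.rev (Fin.last n)) = f 0
    rw [Fin.rev_last]
  have ht : G.trajProb ((revE (V := V) n) f) = G.trajProb f := G.traj_rev htrans f
  rw [h0, hl, ht, if_congr (and_comm) rfl rfl]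

lemma pp_diag (htrans : G.VertexTransitive) (n : ℕ) (x y : V) :
    G.pp n x x = G.pp n y y := by
  obtain ⟨g, hg, hgy⟩ := htrans y x
  rw [WGraph.pp, WGraph.pp,
    ← finsum_comp_equiv (autE (V := V) (n := n) g)
      (f := fun f => if f 0 = x ∧ f (Fin.last n) = x then G.trajProb f else 0)]
  apply finsum_congr
  intro f
  have hcond : ((autE (V := V) (n := n) g) f 0 = x ∧ (autE (V := V) (n := n) g) f (Fin.last n) = x)
      ↔ (f 0 = y ∧ f (Fin.last n) = y) := by
    show (g (f 0) = x ∧ g (f (Fin.last n)) = x) ↔ _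
    rw [← hgy, g.injective.eq_iff, g.injective.eq_iff]
  have ht : G.trajProb ((autE (V := V) (n := n) g) f) = G.trajProb f := G.traj_aut hg f
  rw [ht, if_congr hcond rfl rfl]

/-! ### Splitting a trajectory at a fixed time -/

/-- Initial segment embedding. -/
def emb1 (a b : ℕ) : Fin (a + 1) → Fin (a + b + 1) :=
  fun i => ⟨i.val, by have := i.isLt; omega⟩

/-- Final segment embedding. -/
def emb2 (a b : ℕ) : Fin (b + 1) → Fin (a + b + 1) :=
  fun i => ⟨a + i.val, by have := i.isLt; omega⟩

/-- Concatenation of trajectories. -/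
def glue (a b : ℕ) (g : Fin (a + 1) → V) (h : Fin (b + 1) → V) : Fin (a + b + 1) → V :=
  fun i => if hi : i.val ≤ a then g ⟨i.val, by omega⟩
    else h ⟨i.val - a, by have := i.isLt; omega⟩

lemma traj_split (a b : ℕ) (f : Fin (a + b + 1) → V) :
    G.trajProb f = G.trajProb (f ∘ emb1 a b) * G.trajProb (f ∘ emb2 a b) := by
  rw [WGraph.trajProb, WGraph.trajProb, WGraph.trajProb,
    Fin.prod_univ_add (f := fun i : Fin (a + b) => G.step (f i.castSucc) (f i.succ))]
  congr 1

lemma glue_emb1 (a b : ℕ) (g : Fin (a + 1) → V) (h : Fin (b + 1) → V) :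
    (glue a b g h) ∘ emb1 a b = g := by
  funext i
  have hi : (emb1 a b i).val ≤ a := Nat.lt_succ_iff.mp i.isLt
  show glue a b g h (emb1 a b i) = g i
  rw [glue, dif_pos hi]
  exact congrArg g (Fin.ext rfl)

lemma glue_emb2 (a b : ℕ) (g : Fin (a + 1) → V) (h : Fin (b + 1) → V)
    (hgh : g (Fin.last a) = h 0) :
    (glue a b g h) ∘ emb2 a b = h := by
  funext i
  show glue a b g h (emb2 a b i) = h i
  rcases Nat.eq_zero_or_pos i.val with h0 | hpos
  · have hle : (emb2 a b i).val ≤ a := by simp [emb2, h0]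
    rw [glue, dif_pos hle]
    have hii : i = 0 := Fin.ext h0
    have : (⟨(emb2 a b i).val, by omega⟩ : Fin (a + 1)) = Fin.last a := by
      apply Fin.ext; simp [emb2, h0, Fin.val_last]
    rw [this, hgh, hii]
  · have hle : ¬ (emb2 a b i).val ≤ a := by show ¬ (a + i.val ≤ a); omega
    rw [glue, dif_neg hle]
    exact congrArg h (Fin.ext (by simp [emb2]))

lemma glue_unglue (a b : ℕ) (f : Fin (a + b + 1) → V) :
    glue a b (f ∘ emb1 a b) (f ∘ emb2 a b) = f := by
  funext i
  rw [glue]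
  by_cases hi : i.val ≤ a
  · rw [dif_pos hi]
    exact congrArg f (Fin.ext (by simp [emb1]))
  · rw [dif_neg hi]
    exact congrArg f (Fin.ext (by simp [emb2]; omega))

lemma split (a b : ℕ) (x y z : V) :
    (∑ f ∈ G.pset x (a + b),
        if f 0 = x ∧ f (Fin.last (a + b)) = z ∧ f ⟨a, by omega⟩ = y ∧
            (∀ j : Fin (a + b + 1), j.val < a → f j ≠ y)
          then G.trajProb f else 0)
      = G.firstHitProb x y a * G.pp b y z := by
  have hF : G.firstHitProb x y a
      = ∑ g ∈ G.pset x a, if g 0 = x ∧ g (Fin.last a) = y ∧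
          (∀ i : Fin (a + 1), i ≠ Fin.last a → g i ≠ y) then G.trajProb g else 0 := by
    rw [WGraph.firstHitProb]
    exact G.sum_conv x
      (fun g => if g 0 = x ∧ g (Fin.last a) = y ∧
          (∀ i : Fin (a + 1), i ≠ Fin.last a → g i ≠ y) then G.trajProb g else 0)
      (fun f hf => G.if_support
        (fun g => g (Fin.last a) = y ∧ (∀ i : Fin (a + 1), i ≠ Fin.last a → g i ≠ y)) f hf)
  have hP : G.pp b y z
      = ∑ h ∈ G.pset y b, if h 0 = y ∧ h (Fin.last b) = z then G.trajProb h else 0 := by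
    rw [WGraph.pp]
    exact G.sum_conv y
      (fun h => if h 0 = y ∧ h (Fin.last b) = z then G.trajProb h else 0)
      (fun f hf => G.if_support (fun h => h (Fin.last b) = z) f hf)
  rw [hF, hP, Finset.sum_mul_sum, ← Finset.sum_product']
  have hcomb : ∀ p : (Fin (a + 1) → V) × (Fin (b + 1) → V),
      (if p.1 0 = x ∧ p.1 (Fin.last a) = y ∧
          (∀ i : Fin (a + 1), i ≠ Fin.last a → p.1 i ≠ y) then G.trajProb p.1 else 0)
        * (if p.2 0 = y ∧ p.2 (Fin.last b) = z then G.trajProb p.2 else 0)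
      = if (p.1 0 = x ∧ p.1 (Fin.last a) = y ∧
            (∀ i : Fin (a + 1), i ≠ Fin.last a → p.1 i ≠ y))
          ∧ (p.2 0 = y ∧ p.2 (Fin.last b) = z)
        then G.trajProb p.1 * G.trajProb p.2 else 0 := fun p => by rw [ite_zero_mul_ite_zero]
  rw [Finset.sum_congr rfl fun p _ => hcomb p, ← Finset.sum_filter, ← Finset.sum_filter]
  refine Finset.sum_bij' (fun f _ => (f ∘ emb1 a b, f ∘ emb2 a b))
    (fun p _ => glue a b p.1 p.2) ?_ ?_ ?_ ?_ ?_
  · -- forward membership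
    intro f hf
    rw [Finset.mem_filter] at hf
    obtain ⟨hfS, h0, hl, ha, hmin⟩ := hf
    have hfS' : f 0 = x ∧ ∀ i : Fin (a + b), G.Adj (f i.castSucc) (f i.succ) := by
      simpa [pset, pathSet, Set.Finite.mem_toFinset] using hfS
    rw [Finset.mem_filter, Finset.mem_product]
    refine ⟨⟨?_, ?_⟩, ⟨?_, ?_, ?_⟩, ?_, ?_⟩
    · -- f ∘ emb1 ∈ pset x a
      simp only [pset, Set.Finite.mem_toFinset, pathSet, Set.mem_setOf_eq]
      constructor
      · show f (emb1 a b 0) = x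
        have : emb1 a b 0 = 0 := Fin.ext (by simp [emb1])
        rw [this]; exact hfS'.1
      · intro i
        have := hfS'.2 ⟨i.val, by omega⟩
        have e1 : (emb1 a b i.castSucc) = (⟨i.val, by omega⟩ : Fin (a + b)).castSucc :=
          Fin.ext (by simp [emb1])
        have e2 : (emb1 a b i.succ) = (⟨i.val, by omega⟩ : Fin (a + b)).succ :=
          Fin.ext (by simp [emb1])
        show G.Adj (f (emb1 a b i.castSucc)) (f (emb1 a b i.succ))
        rw [e1, e2]; exact this
    · -- f ∘ emb2 ∈ pset y b
      simp only [pset, Set.Finite.mem_toFinset, pathSet, Set.mem_setOf_eq]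
      constructor
      · show f (emb2 a b 0) = y
        have : emb2 a b 0 = (⟨a, by omega⟩ : Fin (a + b + 1)) := Fin.ext (by simp [emb2])
        rw [this]; exact ha
      · intro i
        have := hfS'.2 ⟨a + i.val, by omega⟩
        have e1 : (emb2 a b i.castSucc) = (⟨a + i.val, by omega⟩ : Fin (a + b)).castSucc :=
          Fin.ext (by simp [emb2])
        have e2 : (emb2 a b i.succ) = (⟨a + i.val, by omega⟩ : Fin (a + b)).succ :=
          Fin.ext (by simp [emb2]; omega)
        show G.Adj (f (emb2 a b i.castSucc)) (f (emb2 a b i.succ))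
        rw [e1, e2]; exact this
    · show f (emb1 a b 0) = x
      have : emb1 a b 0 = 0 := Fin.ext (by simp [emb1])
      rw [this]; exact h0
    · show f (emb1 a b (Fin.last a)) = y
      have : emb1 a b (Fin.last a) = (⟨a, by omega⟩ : Fin (a + b + 1)) :=
        Fin.ext (by simp [emb1])
      rw [this]; exact ha
    · intro i hi
      show f (emb1 a b i) ≠ y
      have hiv : i.val < a := by
        have := i.isLt
        rcases Nat.lt_or_ge i.val a with h | h
        · exact h
        · exact absurd (Fin.ext (by omega : i.val = a)) hi
      exact hmin (emb1 a b i) (by simp [emb1]; omega)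
    · show f (emb2 a b 0) = y
      have : emb2 a b 0 = (⟨a, by omega⟩ : Fin (a + b + 1)) := Fin.ext (by simp [emb2])
      rw [this]; exact ha
    · show f (emb2 a b (Fin.last b)) = z
      have : emb2 a b (Fin.last b) = Fin.last (a + b) := Fin.ext (by simp [emb2])
      rw [this]; exact hl
  · -- backward membership
    intro p hp
    rw [Finset.mem_filter, Finset.mem_product] at hp
    obtain ⟨⟨hg, hh⟩, ⟨hg0, hgl, hgmin⟩, hh0, hhl⟩ := hp
    have hgS : p.1 0 = x ∧ ∀ i : Fin a, G.Adj (p.1 i.castSucc) (p.1 i.succ) := by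
      simpa [pset, pathSet, Set.Finite.mem_toFinset] using hg
    have hhS : p.2 0 = y ∧ ∀ i : Fin b, G.Adj (p.2 i.castSucc) (p.2 i.succ) := by
      simpa [pset, pathSet, Set.Finite.mem_toFinset] using hh
    have hgh : p.1 (Fin.last a) = p.2 0 := by rw [hgl, hh0]
    have hglue1 : ∀ m (hm : m ≤ a), glue a b p.1 p.2 ⟨m, by omega⟩ = p.1 ⟨m, by omega⟩ := by
      intro m hm
      rw [glue, dif_pos (by exact hm : (⟨m, by omega⟩ : Fin (a + b + 1)).val ≤ a)]
    have hglue2 : ∀ m (hm : a ≤ m) (hm2 : m < a + b + 1),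
        glue a b p.1 p.2 ⟨m, hm2⟩ = p.2 ⟨m - a, by omega⟩ := by
      intro m hm hm2
      rcases Nat.eq_or_lt_of_le hm with rfl | hlt
      · rw [glue, dif_pos (le_refl a)]
        have h1 : (⟨a, by omega⟩ : Fin (a + 1)) = Fin.last a := Fin.ext (by simp)
        have h2 : (⟨a - a, by omega⟩ : Fin (b + 1)) = 0 := Fin.ext (by simp)
        rw [h1, h2, hgh]
      · rw [glue, dif_neg (show ¬ (⟨m, hm2⟩ : Fin (a + b + 1)).val ≤ a from
          fun hc => absurd (show m ≤ a from hc) (by omega))]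
    rw [Finset.mem_filter]
    refine ⟨?_, ?_, ?_, ?_, ?_⟩
    · -- glue ∈ pset x (a+b)
      simp only [pset, Set.Finite.mem_toFinset, pathSet, Set.mem_setOf_eq]
      constructor
      · have := hglue1 0 (by omega)
        have h00 : (⟨0, by omega⟩ : Fin (a + b + 1)) = 0 := Fin.ext (by simp)
        have h01 : (⟨0, by omega⟩ : Fin (a + 1)) = 0 := Fin.ext (by simp)
        rw [h00, h01] at this
        exact this.trans hgS.1
      · intro i
        rcases Nat.lt_or_ge i.val a with hlt | hge
        · have e1 : i.castSucc = (⟨i.val, by omega⟩ : Fin (a + b + 1)) := Fin.ext rfl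
          have e2 : i.succ = (⟨i.val + 1, by omega⟩ : Fin (a + b + 1)) := Fin.ext rfl
          rw [e1, e2, hglue1 i.val (by omega), hglue1 (i.val + 1) (by omega)]
          have := hgS.2 ⟨i.val, hlt⟩
          have e3 : (⟨i.val, by omega⟩ : Fin (a + 1)) = (⟨i.val, hlt⟩ : Fin a).castSucc :=
            Fin.ext rfl
          have e4 : (⟨i.val + 1, by omega⟩ : Fin (a + 1)) = (⟨i.val, hlt⟩ : Fin a).succ :=
            Fin.ext rfl
          rw [e3, e4]; exact this
        · have hib := i.isLt
          have e1 : i.castSucc = (⟨i.val, by omega⟩ : Fin (a + b + 1)) := Fin.ext rfl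
          have e2 : i.succ = (⟨i.val + 1, by omega⟩ : Fin (a + b + 1)) := Fin.ext rfl
          rw [e1, e2, hglue2 i.val hge (by omega), hglue2 (i.val + 1) (by omega) (by omega)]
          have := hhS.2 ⟨i.val - a, by omega⟩
          have e3 : (⟨i.val - a, by omega⟩ : Fin (b + 1))
              = (⟨i.val - a, by omega⟩ : Fin b).castSucc := Fin.ext rfl
          have e4 : (⟨i.val + 1 - a, by omega⟩ : Fin (b + 1))
              = (⟨i.val - a, by omega⟩ : Fin b).succ := Fin.ext (by simp; omega)
          rw [e3, e4]; exact this
    · have := hglue1 0 (by omega)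
      have h00 : (⟨0, by omega⟩ : Fin (a + b + 1)) = 0 := Fin.ext (by simp)
      have h01 : (⟨0, by omega⟩ : Fin (a + 1)) = 0 := Fin.ext (by simp)
      rw [h00, h01] at this
      exact this.trans hg0
    · have := hglue2 (a + b) (by omega) (by omega)
      have h00 : (⟨a + b, by omega⟩ : Fin (a + b + 1)) = Fin.last (a + b) := Fin.ext (by simp)
      have h01 : (⟨a + b - a, by omega⟩ : Fin (b + 1)) = Fin.last b := Fin.ext (by simp)
      rw [h00, h01] at this
      exact this.trans hhl
    · have := hglue1 a (le_refl a)
      have h01 : (⟨a, by omega⟩ : Fin (a + 1)) = Fin.last a := Fin.ext (by simp)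
      rw [h01] at this
      exact this.trans hgl
    · intro j hj hjy
      have hjy' : glue a b p.1 p.2 j = y := hjy
      have hje : glue a b p.1 p.2 j = p.1 ⟨j.val, by omega⟩ := hglue1 j.val (by omega)
      refine hgmin ⟨j.val, by omega⟩ ?_ (hje ▸ hjy')
      intro hc
      have := congrArg Fin.val hc
      simp only [Fin.val_last] at this
      omega
  · -- left inverse
    intro f _
    exact glue_unglue a b f
  · -- right inverse
    intro p hp
    rw [Finset.mem_filter, Finset.mem_product] at hp
    obtain ⟨-, ⟨-, hgl, -⟩, hh0, -⟩ := hp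
    have hgh : p.1 (Fin.last a) = p.2 0 := by rw [hgl, hh0]
    exact Prod.ext (glue_emb1 a b p.1 p.2) (glue_emb2 a b p.1 p.2 hgh)
  · -- values
    intro f _
    exact G.traj_split a b f

/-! ### Decomposition at the first hitting time -/

lemma dec (n : ℕ) (x y z : V) :
    (∑ f ∈ G.pset x n,
        if f 0 = x ∧ f (Fin.last n) = z ∧ (∃ i, f i = y) then G.trajProb f else 0)
      = ∑ k : Fin (n + 1), G.firstHitProb x y k.val * G.pp (n - k.val) y z := by
  have point : ∀ f : Fin (n + 1) → V,
      (if f 0 = x ∧ f (Fin.last n) = z ∧ (∃ i, f i = y) then G.trajProb f else 0)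
        = ∑ k : Fin (n + 1), (if f 0 = x ∧ f (Fin.last n) = z ∧ f k = y ∧
            (∀ j : Fin (n + 1), j.val < k.val → f j ≠ y) then G.trajProb f else 0) := by
    intro f
    by_cases hc : f 0 = x ∧ f (Fin.last n) = z ∧ (∃ i, f i = y)
    · rw [if_pos hc]
      obtain ⟨h0, hl, hex⟩ := hc
      have hsne : (Finset.univ.filter fun i : Fin (n + 1) => f i = y).Nonempty :=
        ⟨hex.choose, by simp [hex.choose_spec]⟩
      set k0 := (Finset.univ.filter fun i : Fin (n + 1) => f i = y).min' hsne with hk0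
      have hk0y : f k0 = y := by
        have := (Finset.univ.filter fun i : Fin (n + 1) => f i = y).min'_mem hsne
        simpa using this
      have hmin : ∀ j : Fin (n + 1), j.val < k0.val → f j ≠ y := by
        intro j hj hjy
        have hle : k0 ≤ j :=
          (Finset.univ.filter fun i : Fin (n + 1) => f i = y).min'_le j (by simp [hjy])
        rw [Fin.le_def] at hle
        omega
      rw [Finset.sum_eq_single k0]
      · rw [if_pos ⟨h0, hl, hk0y, hmin⟩]
      · intro b _ hb
        rw [if_neg]
        rintro ⟨-, -, hby, hbmin⟩
        apply hb
        have h1 : k0 ≤ b :=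
          (Finset.univ.filter fun i : Fin (n + 1) => f i = y).min'_le b (by simp [hby])
        rw [Fin.le_def] at h1
        have h2 : ¬ (k0.val < b.val) := fun hlt => (hbmin k0 hlt) hk0y
        exact Fin.ext (by omega)
      · intro h
        exact absurd (Finset.mem_univ k0) h
    · rw [if_neg hc, eq_comm]
      apply Finset.sum_eq_zero
      intro k _
      rw [if_neg]
      rintro ⟨h0, hl, hky, -⟩
      exact hc ⟨h0, hl, ⟨k, hky⟩⟩
  rw [Finset.sum_congr rfl fun f _ => point f, Finset.sum_comm]
  apply Finset.sum_congr rfl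
  intro k _
  obtain ⟨a, ha⟩ := k
  obtain ⟨b, rfl⟩ : ∃ b, n = a + b := ⟨n - a, by omega⟩
  have hval : (⟨a, ha⟩ : Fin (a + b + 1)).val = a := rfl
  rw [hval, Nat.add_sub_cancel_left]
  exact G.split a b x y z

/-! ### The renewal identities -/

lemma pp_eq_sum_fh (n : ℕ) (x y : V) :
    G.pp n x y = ∑ k : Fin (n + 1), G.firstHitProb x y k.val * G.pp (n - k.val) y y := by
  rw [← G.dec n x y y]
  have hconv : G.pp n x y
      = ∑ f ∈ G.pset x n, if f 0 = x ∧ f (Fin.last n) = y then G.trajProb f else 0 := by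
    rw [WGraph.pp]
    exact G.sum_conv x
      (fun f => if f 0 = x ∧ f (Fin.last n) = y then G.trajProb f else 0)
      (fun f hf => G.if_support (fun f => f (Fin.last n) = y) f hf)
  rw [hconv]
  apply Finset.sum_congr rfl
  intro f _
  by_cases hc : f 0 = x ∧ f (Fin.last n) = y
  · rw [if_pos hc, if_pos ⟨hc.1, hc.2, ⟨Fin.last n, hc.2⟩⟩]
  · rw [if_neg hc, if_neg (fun h => hc ⟨h.1, h.2.1⟩)]

lemma pp_self_split {x y : V} (hxy : x ≠ y) (n : ℕ) :
    G.pp n x x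
      = (∑ᶠ f : Fin (n + 1) → V,
          if f 0 = x ∧ f (Fin.last n) = x ∧
              (∀ i : Fin (n + 1), i ≠ 0 → i ≠ Fin.last n → f i ≠ y)
          then G.trajProb f else 0)
        + ∑ k : Fin (n + 1), G.firstHitProb x y k.val * G.pp (n - k.val) y x := by
  have hconv1 : G.pp n x x
      = ∑ f ∈ G.pset x n, if f 0 = x ∧ f (Fin.last n) = x then G.trajProb f else 0 := by
    rw [WGraph.pp]
    exact G.sum_conv x
      (fun f => if f 0 = x ∧ f (Fin.last n) = x then G.trajProb f else 0)
      (fun f hf => G.if_support (fun f => f (Fin.last n) = x) f hf)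
  have hconv2 : (∑ᶠ f : Fin (n + 1) → V,
        if f 0 = x ∧ f (Fin.last n) = x ∧
            (∀ i : Fin (n + 1), i ≠ 0 → i ≠ Fin.last n → f i ≠ y)
        then G.trajProb f else 0)
      = ∑ f ∈ G.pset x n, (if f 0 = x ∧ f (Fin.last n) = x ∧
            (∀ i : Fin (n + 1), i ≠ 0 → i ≠ Fin.last n → f i ≠ y)
          then G.trajProb f else 0) :=
    G.sum_conv x
      (fun f => if f 0 = x ∧ f (Fin.last n) = x ∧
          (∀ i : Fin (n + 1), i ≠ 0 → i ≠ Fin.last n → f i ≠ y)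
        then G.trajProb f else 0)
      (fun f hf => G.if_support
        (fun f => f (Fin.last n) = x ∧
          (∀ i : Fin (n + 1), i ≠ 0 → i ≠ Fin.last n → f i ≠ y)) f hf)
  rw [hconv1, hconv2, ← G.dec n x y x, ← Finset.sum_add_distrib]
  apply Finset.sum_congr rfl
  intro f _
  by_cases hc : f 0 = x ∧ f (Fin.last n) = x
  · rw [if_pos hc]
    by_cases hav : ∀ i : Fin (n + 1), i ≠ 0 → i ≠ Fin.last n → f i ≠ y
    · rw [if_pos ⟨hc.1, hc.2, hav⟩, if_neg, add_zero]
      rintro ⟨-, -, i, hiy⟩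
      have hi0 : i ≠ 0 := by
        intro h
        rw [h, hc.1] at hiy
        exact hxy hiy
      have hil : i ≠ Fin.last n := by
        intro h
        rw [h, hc.2] at hiy
        exact hxy hiy
      exact (hav i hi0 hil) hiy
    · rw [if_neg (fun h => hav h.2.2), zero_add]
      push_neg at hav
      obtain ⟨i, _, _, hiy⟩ := hav
      rw [if_pos ⟨hc.1, hc.2, ⟨i, hiy⟩⟩]
  · rw [if_neg hc, if_neg (fun h => hc ⟨h.1, h.2.1⟩), if_neg (fun h => hc ⟨h.1, h.2.1⟩),
      add_zero]

/-! ### Symmetry of the first-hit probabilities -/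

lemma fh_symm (htrans : G.VertexTransitive) :
    ∀ n (x y : V), G.firstHitProb x y n = G.firstHitProb y x n := by
  intro n
  induction n using Nat.strong_induction_on with
  | _ n ih =>
    intro x y
    rcases eq_or_ne x y with rfl | hxy
    · rfl
    · have hx := G.pp_eq_sum_fh n x y
      have hy := G.pp_eq_sum_fh n y x
      rw [Fin.sum_univ_castSucc] at hx hy
      simp only [Fin.val_last, Nat.sub_self, G.pp_zero_self, mul_one, Fin.coe_castSucc]
        at hx hy
      have hsum : (∑ k : Fin n, G.firstHitProb x y k.val * G.pp (n - k.val) y y)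
          = ∑ k : Fin n, G.firstHitProb y x k.val * G.pp (n - k.val) x x := by
        apply Finset.sum_congr rfl
        intro k _
        rw [ih k.val k.isLt x y, G.pp_diag htrans _ y x]
      have hp : G.pp n x y = G.pp n y x := G.pp_symm htrans n x y
      linarith

end WGraph

open WGraph in
/-- In a locally finite vertex-transitive weighted graph, the probability of
returning to `x` at time `n` without visiting `y` at times `1, …, n-1` equals
the probability of returning to `y` at time `n` without visiting `x`. -/
theorem return_avoiding_symm {V : Type*} (G : WGraph V)
    (htrans : G.VertexTransitive) (x y : V) (n : ℕ) :
    (∑ᶠ f : Fin (n + 1) → V,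
        if f 0 = x ∧ f (Fin.last n) = x ∧
            (∀ i : Fin (n + 1), i ≠ 0 → i ≠ Fin.last n → f i ≠ y)
        then G.trajProb f else 0) =
      ∑ᶠ f : Fin (n + 1) → V,
        if f 0 = y ∧ f (Fin.last n) = y ∧
            (∀ i : Fin (n + 1), i ≠ 0 → i ≠ Fin.last n → f i ≠ x)
        then G.trajProb f else 0 := by
  rcases eq_or_ne x y with rfl | hxy
  · rfl
  · have h1 := G.pp_self_split hxy n
    have h2 := G.pp_self_split hxy.symm n
    have h3 : (∑ k : Fin (n + 1), G.firstHitProb x y k.val * G.pp (n - k.val) y x)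
        = ∑ k : Fin (n + 1), G.firstHitProb y x k.val * G.pp (n - k.val) x y := by
      apply Finset.sum_congr rfl
      intro k _
      rw [G.fh_symm htrans k.val x y, G.pp_symm htrans _ y x]
    have h4 : G.pp n x x = G.pp n y y := G.pp_diag htrans n x y
    linarith
end
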